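/- arXiv:2309.00402 — 5 statements merged into one kernel-verified Lean document; each statement's English description precedes it below -/
import Mathlib

section
/- Let ν be a finite positive Borel measure on ℝ and β̃ ∈ ℝ, not both zero, and define f(z) = z + β̃ + ∫_ℝ dν(t)/(t−z) for z in the upper half-plane H. Then f maps H into H, and f is of zero hyperbolic step if and only if β̃ = 0. -/
set_option linter.unusedSectionVars false
set_option linter.unusedVariables false
set_option maxHeartbeats 1000000


open MeasureTheory Filter Complex Topology

/-- The pseudo-hyperbolic distance on the upper half-plane:
`ρ(z,w) = |z−w|/|z−conj w|`. -/
noncomputable def pseudoHyp (z w : ℂ) : ℝ :=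
  ‖z - w‖ / ‖z - (starRingEnd ℂ) w‖

/-- `f` is of zero hyperbolic step: there exists `z` in the upper half-plane with
`ρ(f^[n+1] z, f^[n] z) → 0`. -/
def ZeroHS (f : ℂ → ℂ) : Prop :=
  ∃ z : ℂ, 0 < z.im ∧
    Tendsto (fun n : ℕ => pseudoHyp (f^[n + 1] z) (f^[n] z)) atTop (𝓝 0)

/-- The self-map of the upper half-plane associated to `β̃` and the finite
measure `ν`: `f(z) = z + β̃ + ∫ dν(t)/(t−z)`. -/
noncomputable def gmap (β : ℝ) (ν : Measure ℝ) (z : ℂ) : ℂ :=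
  z + (β : ℂ) + ∫ t : ℝ, 1 / ((t : ℂ) - z) ∂ν

namespace Stmt6Aux

variable (ν : Measure ℝ) [IsFiniteMeasure ν]

noncomputable def Mnu : ℝ := (ν Set.univ).toReal

lemma Mnu_nonneg : 0 ≤ Mnu ν := ENNReal.toReal_nonneg

noncomputable def Kz (z : ℂ) : ℝ := ∫ t : ℝ, (Complex.normSq ((t:ℂ) - z))⁻¹ ∂ν

noncomputable def Iz (z : ℂ) : ℂ := ∫ t : ℝ, ((t:ℂ) - z)⁻¹ ∂ν

variable {z : ℂ}

lemma sub_ne_zero_of_im (hz : 0 < z.im) (t : ℝ) : (t:ℂ) - z ≠ 0 := by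
  intro h
  have h2 : ((t:ℂ) - z).im = 0 := by rw [h]; simp
  simp only [Complex.sub_im, Complex.ofReal_im, zero_sub, neg_eq_zero] at h2
  linarith

lemma normSq_ge (hz : 0 < z.im) (t : ℝ) : z.im ^ 2 ≤ Complex.normSq ((t:ℂ) - z) := by
  rw [Complex.normSq_apply]
  simp only [Complex.sub_re, Complex.sub_im, Complex.ofReal_re, Complex.ofReal_im, zero_sub]
  nlinarith [sq_nonneg (t - z.re)]

lemma normSq_pos' (hz : 0 < z.im) (t : ℝ) : 0 < Complex.normSq ((t:ℂ) - z) :=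
  lt_of_lt_of_le (by positivity) (normSq_ge hz t)

lemma cont_inv (hz : 0 < z.im) : Continuous fun t : ℝ => ((t:ℂ) - z)⁻¹ :=
  (Complex.continuous_ofReal.sub continuous_const).inv₀ fun t => sub_ne_zero_of_im hz t

lemma norm_ge_im (w : ℂ) : w.im ≤ ‖w‖ :=
  le_trans (le_abs_self _) (Complex.abs_im_le_norm w)

lemma integrable_inv (hz : 0 < z.im) : Integrable (fun t : ℝ => ((t:ℂ) - z)⁻¹) ν := by
  refine Integrable.mono' (integrable_const (z.im)⁻¹) (cont_inv hz).aestronglyMeasurable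
    (ae_of_all _ fun t => ?_)
  rw [norm_inv]
  have h1 : z.im ≤ ‖(t:ℂ) - z‖ := by
    have := norm_ge_im (-((t:ℂ) - z))
    simp only [norm_neg] at this
    simpa using this
  exact inv_anti₀ hz h1

lemma integrable_invNormSq (hz : 0 < z.im) :
    Integrable (fun t : ℝ => (Complex.normSq ((t:ℂ) - z))⁻¹) ν := by
  refine Integrable.mono' (integrable_const ((z.im ^ 2)⁻¹))
    (Continuous.aestronglyMeasurable ((Complex.continuous_normSq.comp
      (Complex.continuous_ofReal.sub continuous_const)).inv₀
        (fun t => (normSq_pos' hz t).ne')))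
    (ae_of_all _ fun t => ?_)
  rw [Real.norm_eq_abs, _root_.abs_of_nonneg (inv_nonneg.2 (Complex.normSq_nonneg _))]
  exact inv_anti₀ (by positivity) (normSq_ge hz t)

lemma Kz_nonneg : 0 ≤ Kz ν z :=
  integral_nonneg fun t => inv_nonneg.2 (Complex.normSq_nonneg _)

lemma Kz_le (hz : 0 < z.im) : Kz ν z ≤ Mnu ν * (z.im ^ 2)⁻¹ := by
  have := integral_mono (μ := ν) (integrable_invNormSq ν hz) (integrable_const ((z.im ^ 2)⁻¹))
    (fun t => inv_anti₀ (by positivity) (normSq_ge hz t))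
  rwa [integral_const, smul_eq_mul, show ν.real Set.univ = Mnu ν from rfl] at this

lemma Iz_im (hz : 0 < z.im) : (Iz ν z).im = z.im * Kz ν z := by
  have h := (Complex.imCLM.integral_comp_comm (integrable_inv ν hz)).symm
  simp only [Complex.imCLM_apply] at h
  rw [Iz, h]
  have h2 : ∀ t : ℝ, (((t:ℂ) - z)⁻¹).im = z.im * (Complex.normSq ((t:ℂ) - z))⁻¹ := by
    intro t
    rw [Complex.inv_im]
    simp only [Complex.sub_im, Complex.ofReal_im, zero_sub, neg_neg]
    rw [div_eq_mul_inv]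
  simp only [h2]
  rw [integral_const_mul, Kz]

lemma Iz_im_nonneg (hz : 0 < z.im) : 0 ≤ (Iz ν z).im := by
  rw [Iz_im ν hz]
  exact mul_nonneg hz.le (Kz_nonneg ν)


lemma inv_le_amgm {r ε : ℝ} (hr : 0 < r) (hε : 0 < ε) :
    r⁻¹ ≤ (ε + (r ^ 2)⁻¹ * ε⁻¹) / 2 := by
  rw [le_div_iff₀ (by norm_num : (0:ℝ) < 2), ← sub_nonneg]
  have h : ε + (r ^ 2)⁻¹ * ε⁻¹ - r⁻¹ * 2 = (ε * r - 1) ^ 2 / (ε * r ^ 2) := by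
    field_simp; ring
  rw [h]; positivity

lemma norm_Iz_le (hz : 0 < z.im) {ε : ℝ} (hε : 0 < ε) :
    ‖Iz ν z‖ ≤ (ε * Mnu ν + Kz ν z / ε) / 2 := by
  have h1 : ‖Iz ν z‖ ≤ ∫ t, ‖((t:ℂ) - z)⁻¹‖ ∂ν := norm_integral_le_integral_norm _
  have hptw : ∀ t : ℝ, ‖((t:ℂ) - z)⁻¹‖ ≤ (ε + (Complex.normSq ((t:ℂ) - z))⁻¹ * ε⁻¹) / 2 := by
    intro t
    rw [norm_inv]
    have hrpos : 0 < ‖(t:ℂ) - z‖ := lt_of_lt_of_le hz (by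
      have := norm_ge_im (-((t:ℂ) - z)); simp only [norm_neg] at this; simpa using this)
    have hq : Complex.normSq ((t:ℂ) - z) = ‖(t:ℂ) - z‖ ^ 2 := by
      rw [Complex.sq_norm]
    rw [hq]
    exact inv_le_amgm hrpos hε
  have h2 : ∫ t, ‖((t:ℂ) - z)⁻¹‖ ∂ν
      ≤ ∫ t, (ε + (Complex.normSq ((t:ℂ) - z))⁻¹ * ε⁻¹) / 2 ∂ν := by
    refine integral_mono (integrable_inv ν hz).norm ?_ hptw
    exact (((integrable_const ε).add ((integrable_invNormSq ν hz).mul_const ε⁻¹)).div_const 2)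
  have h3 : ∫ t, (ε + (Complex.normSq ((t:ℂ) - z))⁻¹ * ε⁻¹) / 2 ∂ν
      = (ε * Mnu ν + Kz ν z / ε) / 2 := by
    rw [integral_div, integral_add (integrable_const ε)
      ((integrable_invNormSq ν hz).mul_const ε⁻¹), integral_const, integral_mul_const, smul_eq_mul,
      show ∫ t, (Complex.normSq ((t:ℂ) - z))⁻¹ ∂ν = Kz ν z from rfl,
      show ν.real Set.univ = Mnu ν from rfl, div_eq_mul_inv (Kz ν z) ε]
    ring
  linarith

lemma norm_Iz_le' (hz : 0 < z.im) : ‖Iz ν z‖ ≤ Mnu ν / z.im := by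
  have h := norm_Iz_le ν hz (ε := (z.im)⁻¹) (by positivity)
  have h2 : Kz ν z / (z.im)⁻¹ ≤ Mnu ν * z.im⁻¹ := by
    rw [div_inv_eq_mul]
    calc Kz ν z * z.im ≤ Mnu ν * (z.im ^ 2)⁻¹ * z.im :=
      mul_le_mul_of_nonneg_right (Kz_le ν hz) hz.le
    _ = Mnu ν * z.im⁻¹ := by field_simp
  calc ‖Iz ν z‖ ≤ ((z.im)⁻¹ * Mnu ν + Kz ν z / (z.im)⁻¹) / 2 := h
  _ ≤ (Mnu ν * z.im⁻¹ + Mnu ν * z.im⁻¹) / 2 := by rw [mul_comm]; linarith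
  _ = Mnu ν / z.im := by rw [div_eq_mul_inv]; ring

lemma gmap_apply (β : ℝ) (z : ℂ) : gmap β ν z = z + (β:ℂ) + Iz ν z := by
  simp only [gmap, Iz, one_div]

lemma gmap_im (β : ℝ) (hz : 0 < z.im) : (gmap β ν z).im = z.im * (1 + Kz ν z) := by
  rw [gmap_apply]
  simp only [Complex.add_im, Complex.ofReal_im, add_zero, Iz_im ν hz]
  ring

lemma gmap_im_pos (β : ℝ) (hz : 0 < z.im) : 0 < (gmap β ν z).im := by
  rw [gmap_im ν β hz]
  have := Kz_nonneg (ν := ν) (z := z)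
  positivity

lemma gmap_im_ge (β : ℝ) (hz : 0 < z.im) : z.im ≤ (gmap β ν z).im := by
  rw [gmap_im ν β hz]
  nlinarith [Kz_nonneg (ν := ν) (z := z)]

lemma exists_mass (hν : ν ≠ 0) :
    ∃ R : ℝ, 0 < R ∧ 0 < (ν (Set.Icc (-R) R)).toReal := by
  by_contra h
  push_neg at h
  have hz : ∀ n : ℕ, ν (Set.Icc (-((n:ℝ)+1)) ((n:ℝ)+1)) = 0 := by
    intro n
    have h1 := h ((n:ℝ)+1) (by positivity)
    have h2 : (ν (Set.Icc (-((n:ℝ)+1)) ((n:ℝ)+1))).toReal = 0 := le_antisymm h1 ENNReal.toReal_nonneg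
    exact (ENNReal.toReal_eq_zero_iff _).1 h2 |>.resolve_right (measure_ne_top ν _)
  have hcover : (Set.univ : Set ℝ) ⊆ ⋃ n : ℕ, Set.Icc (-((n:ℝ)+1)) ((n:ℝ)+1) := by
    intro x _
    refine Set.mem_iUnion.2 ⟨⌈|x|⌉₊, ?_⟩
    constructor
    · have := Nat.le_ceil |x|
      have := abs_le.1 (le_refl |x|)
      have h3 : -|x| ≤ x := neg_abs_le x
      have h4 : |x| ≤ (⌈|x|⌉₊ : ℝ) + 1 := le_trans (Nat.le_ceil _) (by linarith)
      linarith
    · have h4 : x ≤ |x| := le_abs_self x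
      have h5 : |x| ≤ (⌈|x|⌉₊ : ℝ) + 1 := le_trans (Nat.le_ceil _) (by linarith)
      linarith
  have : ν Set.univ = 0 := by
    refine le_antisymm ?_ zero_le
    calc ν Set.univ ≤ ν (⋃ n : ℕ, Set.Icc (-((n:ℝ)+1)) ((n:ℝ)+1)) := measure_mono hcover
    _ ≤ ∑' n : ℕ, ν (Set.Icc (-((n:ℝ)+1)) ((n:ℝ)+1)) := measure_iUnion_le _
    _ = 0 := ENNReal.tsum_eq_zero.2 hz
  exact hν (MeasureTheory.Measure.measure_univ_eq_zero.1 this)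

lemma Kz_lower (hz : 0 < z.im) {R : ℝ} :
    (ν (Set.Icc (-R) R)).toReal * (((R + |z.re|) ^ 2 + z.im ^ 2)⁻¹) ≤ Kz ν z := by
  have hc : 0 < (R + |z.re|) ^ 2 + z.im ^ 2 := by positivity
  have hptw : ∀ t ∈ Set.Icc (-R) R,
      ((R + |z.re|) ^ 2 + z.im ^ 2)⁻¹ ≤ (Complex.normSq ((t:ℂ) - z))⁻¹ := by
    intro t ht
    have habs : |t - z.re| ≤ R + |z.re| := by
      calc |t - z.re| ≤ |t| + |z.re| := abs_sub t z.re
      _ ≤ R + |z.re| := by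
        have := abs_le.2 ⟨ht.1, ht.2⟩
        linarith
    have hsq : (t - z.re) ^ 2 ≤ (R + |z.re|) ^ 2 := by
      nlinarith [abs_nonneg (t - z.re), _root_.sq_abs (t - z.re), neg_abs_le (t - z.re), le_abs_self (t - z.re)]
    have hns : Complex.normSq ((t:ℂ) - z) ≤ (R + |z.re|) ^ 2 + z.im ^ 2 := by
      rw [Complex.normSq_apply]
      simp only [Complex.sub_re, Complex.sub_im, Complex.ofReal_re, Complex.ofReal_im, zero_sub]
      nlinarith
    exact inv_anti₀ (normSq_pos' hz t) hns
  have h1 := setIntegral_ge_of_const_le (μ := ν) measurableSet_Icc (measure_ne_top ν _)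
    hptw ((integrable_invNormSq ν hz).integrableOn)
  have h2 := setIntegral_le_integral (μ := ν) (s := Set.Icc (-R) R) (integrable_invNormSq ν hz)
    (ae_of_all _ fun t => inv_nonneg.2 (Complex.normSq_nonneg _))
  rw [mul_comm]
  calc ((R + |z.re|) ^ 2 + z.im ^ 2)⁻¹ * (ν (Set.Icc (-R) R)).toReal
      ≤ ∫ t in Set.Icc (-R) R, (Complex.normSq ((t:ℂ) - z))⁻¹ ∂ν := by
          rw [smul_eq_mul, mul_comm] at h1; exact h1
  _ ≤ Kz ν z := h2


section Traj

variable (β : ℝ) (z₀ : ℂ)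

noncomputable def w (n : ℕ) : ℂ := (gmap β ν)^[n] z₀

lemma w_zero : w ν β z₀ 0 = z₀ := rfl

lemma w_succ (n : ℕ) : w ν β z₀ (n + 1) = gmap β ν (w ν β z₀ n) :=
  Function.iterate_succ_apply' _ _ _

variable {z₀}

lemma w_im_pos (hz₀ : 0 < z₀.im) (n : ℕ) : 0 < (w ν β z₀ n).im := by
  induction n with
  | zero => exact hz₀
  | succ n ih => rw [w_succ]; exact gmap_im_pos ν β ih

lemma w_im_succ (hz₀ : 0 < z₀.im) (n : ℕ) :
    (w ν β z₀ (n + 1)).im = (w ν β z₀ n).im * (1 + Kz ν (w ν β z₀ n)) := by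
  rw [w_succ]; exact gmap_im ν β (w_im_pos ν β hz₀ n)

lemma w_im_mono (hz₀ : 0 < z₀.im) : Monotone (fun n => (w ν β z₀ n).im) :=
  monotone_nat_of_le_succ fun n => by
    simp only [w_succ]; exact gmap_im_ge ν β (w_im_pos ν β hz₀ n)

lemma w_im_ge (hz₀ : 0 < z₀.im) (n : ℕ) : z₀.im ≤ (w ν β z₀ n).im :=
  w_im_mono ν β hz₀ (Nat.zero_le n)

lemma w_step (n : ℕ) : w ν β z₀ (n + 1) - w ν β z₀ n = (β:ℂ) + Iz ν (w ν β z₀ n) := by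
  rw [w_succ, gmap_apply]; ring

lemma sum_Kz_le (hz₀ : 0 < z₀.im) (n : ℕ) :
    z₀.im * (∑ k ∈ Finset.range n, Kz ν (w ν β z₀ k)) ≤ (w ν β z₀ n).im - z₀.im := by
  induction n with
  | zero => simp [w_zero]
  | succ n ih =>
    rw [Finset.sum_range_succ, w_im_succ ν β hz₀]
    have h1 : z₀.im ≤ (w ν β z₀ n).im := w_im_ge ν β hz₀ n
    have h2 : 0 ≤ Kz ν (w ν β z₀ n) := Kz_nonneg ν
    nlinarith

lemma w_denom_ge (hz₀ : 0 < z₀.im) (n : ℕ) :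
    2 * (w ν β z₀ n).im ≤ ‖w ν β z₀ (n + 1) - (starRingEnd ℂ) (w ν β z₀ n)‖ := by
  have h1 : (w ν β z₀ (n + 1) - (starRingEnd ℂ) (w ν β z₀ n)).im
      = (w ν β z₀ (n + 1)).im + (w ν β z₀ n).im := by
    simp [Complex.sub_im, Complex.conj_im]
  have h2 := norm_ge_im (w ν β z₀ (n + 1) - (starRingEnd ℂ) (w ν β z₀ n))
  have h3 : (w ν β z₀ n).im ≤ (w ν β z₀ (n + 1)).im :=
    w_im_mono ν β hz₀ (Nat.le_succ n)
  rw [h1] at h2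
  linarith

lemma rho_eq (n : ℕ) :
    pseudoHyp (w ν β z₀ (n + 1)) (w ν β z₀ n)
      = ‖(β:ℂ) + Iz ν (w ν β z₀ n)‖
        / ‖w ν β z₀ (n + 1) - (starRingEnd ℂ) (w ν β z₀ n)‖ := by
  rw [pseudoHyp, w_step ν β n]

end Traj


lemma im_tendsto_atTop (hν : ν ≠ 0) {z₀ : ℂ} (hz₀ : 0 < z₀.im) :
    Tendsto (fun n => (w ν 0 z₀ n).im) atTop atTop := by
  rcases tendsto_of_monotone (w_im_mono ν 0 hz₀) with h | ⟨l, hl⟩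
  · exact h
  exfalso
  obtain ⟨R, hR, hm⟩ := exists_mass ν hν
  set m : ℝ := (ν (Set.Icc (-R) R)).toReal with hmdef
  set y : ℕ → ℝ := fun n => (w ν 0 z₀ n).im with hy
  set K : ℕ → ℝ := fun n => Kz ν (w ν 0 z₀ n) with hKdef
  have hKnn : ∀ n, 0 ≤ K n := fun n => Kz_nonneg ν
  have hyl : ∀ n, y n ≤ l := fun n => Monotone.ge_of_tendsto (w_im_mono ν 0 hz₀) hl n
  have hy0 : ∀ n, z₀.im ≤ y n := fun n => w_im_ge ν 0 hz₀ n
  have hl0 : z₀.im ≤ l := le_trans (hy0 0) (hyl 0)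
  have hlpos : 0 < l := lt_of_lt_of_le hz₀ hl0
  set S : ℝ := (l - z₀.im) / z₀.im with hS
  have hSnn : 0 ≤ S := div_nonneg (by linarith) hz₀.le
  have hsumK : ∀ n, ∑ k ∈ Finset.range n, K k ≤ S := by
    intro n
    have h1 := sum_Kz_le ν 0 hz₀ n
    rw [hS, le_div_iff₀ hz₀]
    have h2 := hyl n
    simp only [hy] at h2
    nlinarith
  set C2 : ℝ := (Mnu ν + S) / 2 with hC2
  have hC2nn : 0 ≤ C2 := by
    have := Mnu_nonneg ν
    rw [hC2]; positivity
  have hx : ∀ n : ℕ, 1 ≤ n → |(w ν 0 z₀ n).re - z₀.re| ≤ C2 * Real.sqrt n := by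
    intro n hn
    have hsq1 : (1:ℝ) ≤ Real.sqrt n := by
      rw [show (1:ℝ) = Real.sqrt 1 from (Real.sqrt_one).symm]
      exact Real.sqrt_le_sqrt (by exact_mod_cast hn)
    have hsqpos : 0 < Real.sqrt n := lt_of_lt_of_le one_pos hsq1
    set ε : ℝ := (Real.sqrt n)⁻¹ with hε
    have hεpos : 0 < ε := by positivity
    have htel : (w ν 0 z₀ n).re - z₀.re
        = ∑ k ∈ Finset.range n, ((w ν 0 z₀ (k+1)).re - (w ν 0 z₀ k).re) := by
      rw [Finset.sum_range_sub (fun k => (w ν 0 z₀ k).re) n, w_zero]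
    rw [htel]
    have hstepb : ∀ k ∈ Finset.range n,
        |(w ν 0 z₀ (k+1)).re - (w ν 0 z₀ k).re| ≤ (ε * Mnu ν + K k / ε) / 2 := by
      intro k _
      have hstep : (w ν 0 z₀ (k+1)).re - (w ν 0 z₀ k).re = (Iz ν (w ν 0 z₀ k)).re := by
        have h2 := congrArg Complex.re (w_step ν 0 (z₀ := z₀) k)
        simpa using h2
      rw [hstep]
      calc |(Iz ν (w ν 0 z₀ k)).re| ≤ ‖Iz ν (w ν 0 z₀ k)‖ :=
            Complex.abs_re_le_norm _
      _ = ‖Iz ν (w ν 0 z₀ k)‖ := rfl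
      _ ≤ (ε * Mnu ν + Kz ν (w ν 0 z₀ k) / ε) / 2 :=
            norm_Iz_le ν (w_im_pos ν 0 hz₀ k) hεpos
    calc |∑ k ∈ Finset.range n, ((w ν 0 z₀ (k+1)).re - (w ν 0 z₀ k).re)|
        ≤ ∑ k ∈ Finset.range n, |(w ν 0 z₀ (k+1)).re - (w ν 0 z₀ k).re| :=
          Finset.abs_sum_le_sum_abs _ _
    _ ≤ ∑ k ∈ Finset.range n, (ε * Mnu ν + K k / ε) / 2 := Finset.sum_le_sum hstepb
    _ = (ε * Mnu ν * n + (∑ k ∈ Finset.range n, K k) / ε) / 2 := by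
        rw [← Finset.sum_div, Finset.sum_add_distrib, Finset.sum_const, Finset.card_range,
          nsmul_eq_mul, ← Finset.sum_div]
        ring
    _ ≤ (ε * Mnu ν * n + S / ε) / 2 := by
        have h3 : (∑ k ∈ Finset.range n, K k) / ε ≤ S / ε :=
          (div_le_div_iff_of_pos_right hεpos).2 (hsumK n)
        linarith
    _ ≤ C2 * Real.sqrt n := by
        have hs2 : Real.sqrt n * Real.sqrt n = (n:ℝ) := Real.mul_self_sqrt (Nat.cast_nonneg n)
        have h4 : ε * (n:ℝ) = Real.sqrt n := by
          rw [hε, inv_mul_eq_div, div_eq_iff hsqpos.ne', hs2]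
        have h5 : S / ε = S * Real.sqrt n := by
          rw [hε, div_inv_eq_mul]
        rw [h5, hC2]
        have h6 : (ε * Mnu ν * (n:ℝ) + S * Real.sqrt n) / 2
            = (Mnu ν + S) / 2 * Real.sqrt n := by rw [← h4]; ring
        linarith
  set A : ℝ := R + |z₀.re| + C2 with hA
  have hApos : 0 < A := by positivity
  set c : ℝ := A ^ 2 + l ^ 2 with hc
  have hcpos : 0 < c := by positivity
  have hKlow : ∀ n : ℕ, 1 ≤ n → m * c⁻¹ * ((n:ℝ))⁻¹ ≤ K n := by
    intro n hn
    have hnpos : (0:ℝ) < n := by exact_mod_cast hn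
    have h1 : m * (((R + |(w ν 0 z₀ n).re|) ^ 2 + (w ν 0 z₀ n).im ^ 2)⁻¹) ≤ K n :=
      Kz_lower ν (w_im_pos ν 0 hz₀ n)
    have hsq1 : (1:ℝ) ≤ Real.sqrt n := by
      rw [show (1:ℝ) = Real.sqrt 1 from (Real.sqrt_one).symm]
      exact Real.sqrt_le_sqrt (by exact_mod_cast hn)
    have hs2 : Real.sqrt n * Real.sqrt n = (n:ℝ) := Real.mul_self_sqrt (Nat.cast_nonneg n)
    have hxb : |(w ν 0 z₀ n).re| ≤ |z₀.re| + C2 * Real.sqrt n := by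
      have h6 := hx n hn
      have h7 : |(w ν 0 z₀ n).re| - |z₀.re| ≤ |(w ν 0 z₀ n).re - z₀.re| :=
        abs_sub_abs_le_abs_sub _ _
      linarith
    have hbound : (R + |(w ν 0 z₀ n).re|) ^ 2 + (w ν 0 z₀ n).im ^ 2 ≤ c * n := by
      have hyn : (w ν 0 z₀ n).im ≤ l := hyl n
      have hynpos : 0 < (w ν 0 z₀ n).im := w_im_pos ν 0 hz₀ n
      have habs : (0:ℝ) ≤ |(w ν 0 z₀ n).re| := abs_nonneg _
      have ha1 : R + |(w ν 0 z₀ n).re| ≤ A * Real.sqrt n := by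
        rw [hA]
        nlinarith [mul_le_mul_of_nonneg_left hsq1
          (by positivity : (0:ℝ) ≤ R + |z₀.re|)]
      have ha2 : (R + |(w ν 0 z₀ n).re|) ^ 2 ≤ (A * Real.sqrt n) ^ 2 := by
        have h0 : 0 ≤ R + |(w ν 0 z₀ n).re| := by positivity
        nlinarith
      have ha3 : (w ν 0 z₀ n).im ^ 2 ≤ l ^ 2 * (Real.sqrt n * Real.sqrt n) := by
        have hb1 : (w ν 0 z₀ n).im ^ 2 ≤ l ^ 2 := by nlinarith
        have hb2 : (1:ℝ) ≤ Real.sqrt n * Real.sqrt n := by nlinarith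
        nlinarith [sq_nonneg l]
      rw [hc, ← hs2]
      nlinarith [ha2, ha3]
    have hpos2 : 0 < (R + |(w ν 0 z₀ n).re|) ^ 2 + (w ν 0 z₀ n).im ^ 2 := by
      have := w_im_pos ν 0 hz₀ n
      positivity
    calc m * c⁻¹ * ((n:ℝ))⁻¹ = m * ((c * n)⁻¹) := by
          rw [mul_inv]; ring
    _ ≤ m * (((R + |(w ν 0 z₀ n).re|) ^ 2 + (w ν 0 z₀ n).im ^ 2)⁻¹) :=
          mul_le_mul_of_nonneg_left (inv_anti₀ hpos2 hbound) hm.le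
    _ ≤ K n := h1
  have hbd : ∀ N : ℕ, ∑ k ∈ Finset.range N, (1 / (k + 1) : ℝ) ≤ c / m * S := by
    intro N
    have h1 : ∑ k ∈ Finset.range N, K (k + 1) ≤ S := by
      have h2 := hsumK (N + 1)
      rw [Finset.sum_range_succ'] at h2
      have h3 := hKnn 0
      linarith
    have h2 : ∀ k ∈ Finset.range N, (1 / (k + 1) : ℝ) ≤ c / m * K (k + 1) := by
      intro k _
      have h3 := hKlow (k + 1) (Nat.le_add_left 1 k)
      have h4 : ((k:ℝ) + 1)⁻¹ = c / m * (m * c⁻¹ * (((k:ℕ)+1:ℕ):ℝ)⁻¹) := by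
        push_cast
        field_simp
      rw [one_div, h4]
      exact mul_le_mul_of_nonneg_left h3 (div_nonneg hcpos.le hm.le)
    calc ∑ k ∈ Finset.range N, (1 / (k + 1) : ℝ)
        ≤ ∑ k ∈ Finset.range N, c / m * K (k + 1) := Finset.sum_le_sum h2
    _ = c / m * ∑ k ∈ Finset.range N, K (k + 1) := by rw [Finset.mul_sum]
    _ ≤ c / m * S := mul_le_mul_of_nonneg_left h1 (div_nonneg hcpos.le hm.le)
  obtain ⟨N, hN⟩ :=
    (Real.tendsto_sum_range_one_div_nat_succ_atTop.eventually_gt_atTop (c / m * S)).exists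
  exact absurd (hbd N) (not_le.2 hN)


lemma sum_inv_sq_aux : ∀ J : ℕ, ∑ j ∈ Finset.range J, ((((j:ℝ)+1)^2)⁻¹) ≤ 2 - ((J:ℝ))⁻¹ := by
  intro J
  induction J with
  | zero => norm_num
  | succ J ih =>
    rw [Finset.sum_range_succ]
    rcases Nat.eq_zero_or_pos J with h | h
    · subst h; norm_num
    have hJ : (1:ℝ) ≤ (J:ℝ) := by exact_mod_cast h
    have key : (((J:ℝ)+1)^2)⁻¹ ≤ (J:ℝ)⁻¹ - ((J:ℝ)+1)⁻¹ := by
      rw [inv_sub_inv (by positivity) (by positivity)]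
      rw [div_eq_mul_inv]
      have h2 : (J:ℝ) * ((J:ℝ)+1) ≤ ((J:ℝ)+1)^2 := by nlinarith
      have := inv_anti₀ (by positivity : (0:ℝ) < (J:ℝ) * ((J:ℝ)+1)) h2
      calc (((J:ℝ)+1)^2)⁻¹ ≤ ((J:ℝ) * ((J:ℝ)+1))⁻¹ := this
      _ = 1 * ((J:ℝ)*((J:ℝ)+1))⁻¹ := by ring
      _ = ((J:ℝ)+1-(J:ℝ)) * ((J:ℝ)*((J:ℝ)+1))⁻¹ := by norm_num
    push_cast
    linarith

lemma row_sum_le {d Y : ℝ} (hd : 0 < d) (hY : 0 < Y) (M : ℕ) :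
    ∑ j ∈ Finset.range M, ((d*(j:ℝ))^2 + Y^2)⁻¹ ≤ (Y^2)⁻¹ + 2 * (d^2)⁻¹ := by
  rcases Nat.eq_zero_or_pos M with h | h
  · subst h; simp; positivity
  obtain ⟨J, rfl⟩ : ∃ J, M = J + 1 := ⟨M - 1, (Nat.succ_pred_eq_of_pos h).symm⟩
  rw [Finset.sum_range_succ']
  have h0 : ((d*((0:ℕ):ℝ))^2 + Y^2)⁻¹ = (Y^2)⁻¹ := by norm_num
  have hterm : ∀ j : ℕ, ((d*((j+1:ℕ):ℝ))^2 + Y^2)⁻¹ ≤ (d^2)⁻¹ * ((((j:ℝ)+1)^2)⁻¹) := by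
    intro j
    rw [← mul_inv]
    apply inv_anti₀
    · positivity
    · push_cast; nlinarith [sq_nonneg Y, sq_nonneg (d*((j:ℝ)+1))]
  have hsum : ∑ j ∈ Finset.range J, ((d*((j+1:ℕ):ℝ))^2 + Y^2)⁻¹
      ≤ (d^2)⁻¹ * ∑ j ∈ Finset.range J, ((((j:ℝ)+1)^2)⁻¹) := by
    rw [Finset.mul_sum]
    exact Finset.sum_le_sum fun j _ => hterm j
  have h2 := sum_inv_sq_aux J
  have h3 : (0:ℝ) ≤ ((J:ℝ))⁻¹ := by positivity
  have h4 : (d^2)⁻¹ * ∑ j ∈ Finset.range J, ((((j:ℝ)+1)^2)⁻¹) ≤ (d^2)⁻¹ * 2 := by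
    apply mul_le_mul_of_nonneg_left _ (by positivity)
    linarith
  have h5 : (0:ℝ) < 1 + J := by positivity
  push_cast at *
  linarith [hsum]

lemma spacing_sum {u : ℕ → ℝ} {d Y : ℝ} (hd : 0 < d) (hY : 0 < Y)
    (hu : ∀ k, u k + d ≤ u (k + 1)) (M : ℕ) :
    ∑ k ∈ Finset.range M, ((u k)^2 + Y^2)⁻¹ ≤ 2 * ((Y^2)⁻¹ + 2 * (d^2)⁻¹) := by
  classical
  have hgap : ∀ k j : ℕ, u k + d * j ≤ u (k + j) := by
    intro k j
    induction j with
    | zero => simp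
    | succ j ih =>
      have := hu (k + j)
      push_cast
      rw [show k + (j+1) = (k + j) + 1 from rfl]
      push_cast at ih
      linarith
  set g : ℕ → ℝ := fun k => ((u k)^2 + Y^2)⁻¹ with hg
  have hgnn : ∀ k, 0 ≤ g k := fun k => by positivity
  set h : ℕ → ℝ := fun j => ((d*(j:ℝ))^2 + Y^2)⁻¹ with hh
  have hhnn : ∀ j, 0 ≤ h j := fun j => by positivity
  have hrow := row_sum_le hd hY M
  set P := (Finset.range M).filter (fun k => 0 ≤ u k) with hP
  set Q := (Finset.range M).filter (fun k => ¬ 0 ≤ u k) with hQ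
  have hsplit : ∑ k ∈ Finset.range M, g k = ∑ k ∈ P, g k + ∑ k ∈ Q, g k :=
    (Finset.sum_filter_add_sum_filter_not _ _ _).symm
  have hPbound : ∑ k ∈ P, g k ≤ ∑ j ∈ Finset.range M, h j := by
    rcases P.eq_empty_or_nonempty with hE | hne
    · rw [hE]; simp
      exact Finset.sum_nonneg fun j _ => hhnn j
    set k0 := P.min' hne with hk0
    have hk0P : k0 ∈ P := P.min'_mem hne
    have hk0nn : 0 ≤ u k0 := (Finset.mem_filter.1 hk0P).2
    have hterm : ∀ k ∈ P, g k ≤ h (k - k0) := by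
      intro k hk
      have hk0le : k0 ≤ k := P.min'_le k (by exact hk)
      have hul : u k0 + d * ((k - k0 : ℕ):ℝ) ≤ u k := by
        have := hgap k0 (k - k0)
        rwa [Nat.add_sub_cancel' hk0le] at this
      have hdnn : 0 ≤ d * ((k - k0 : ℕ):ℝ) := by positivity
      apply inv_anti₀ (by positivity)
      nlinarith
    calc ∑ k ∈ P, g k ≤ ∑ k ∈ P, h (k - k0) := Finset.sum_le_sum hterm
    _ = ∑ j ∈ P.image (fun k => k - k0), h j := by
        rw [Finset.sum_image]
        intro a ha b hb hab
        have ha' : k0 ≤ a := P.min'_le a ha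
        have hb' : k0 ≤ b := P.min'_le b hb
        simp only at hab
        omega
    _ ≤ ∑ j ∈ Finset.range M, h j := by
        apply Finset.sum_le_sum_of_subset_of_nonneg
        · intro j hj
          obtain ⟨k, hk, rfl⟩ := Finset.mem_image.1 hj
          have : k < M := Finset.mem_range.1 (Finset.mem_filter.1 hk).1
          exact Finset.mem_range.2 (lt_of_le_of_lt (Nat.sub_le k k0) this)
        · intro j _ _; exact hhnn j
  have hQbound : ∑ k ∈ Q, g k ≤ ∑ j ∈ Finset.range M, h j := by
    rcases Q.eq_empty_or_nonempty with hE | hne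
    · rw [hE]; simp
      exact Finset.sum_nonneg fun j _ => hhnn j
    set k1 := Q.max' hne with hk1
    have hk1Q : k1 ∈ Q := Q.max'_mem hne
    have hk1neg : u k1 < 0 := lt_of_not_ge (Finset.mem_filter.1 hk1Q).2
    have hterm : ∀ k ∈ Q, g k ≤ h (k1 - k) := by
      intro k hk
      have hkle : k ≤ k1 := Q.le_max' k hk
      have hul : u k + d * ((k1 - k : ℕ):ℝ) ≤ u k1 := by
        have := hgap k (k1 - k)
        rwa [Nat.add_sub_cancel' hkle] at this
      have hdnn : 0 ≤ d * ((k1 - k : ℕ):ℝ) := by positivity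
      apply inv_anti₀ (by positivity)
      nlinarith
    calc ∑ k ∈ Q, g k ≤ ∑ k ∈ Q, h (k1 - k) := Finset.sum_le_sum hterm
    _ = ∑ j ∈ Q.image (fun k => k1 - k), h j := by
        rw [Finset.sum_image]
        intro a ha b hb hab
        have ha' : a ≤ k1 := Q.le_max' a ha
        have hb' : b ≤ k1 := Q.le_max' b hb
        simp only at hab
        omega
    _ ≤ ∑ j ∈ Finset.range M, h j := by
        apply Finset.sum_le_sum_of_subset_of_nonneg
        · intro j hj
          obtain ⟨k, hk, rfl⟩ := Finset.mem_image.1 hj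
          have hk1M : k1 < M := Finset.mem_range.1 (Finset.mem_filter.1 hk1Q).1
          exact Finset.mem_range.2 (lt_of_le_of_lt (Nat.sub_le k1 k) hk1M)
        · intro j _ _; exact hhnn j
  rw [hsplit]
  linarith


lemma normSq_sub' (t : ℝ) (zz : ℂ) :
    Complex.normSq ((t:ℂ) - zz) = (t - zz.re)^2 + zz.im^2 := by
  rw [Complex.normSq_apply]
  simp only [Complex.sub_re, Complex.sub_im, Complex.ofReal_re, Complex.ofReal_im, zero_sub]
  ring

lemma abs_re_le_norm (zz : ℂ) : |zz.re| ≤ ‖zz‖ := by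
  exact Complex.abs_re_le_norm _

lemma im_tendsto_of_ne {β : ℝ} (hβ : β ≠ 0) {z₀ : ℂ} (hz₀ : 0 < z₀.im) :
    ∃ l : ℝ, Tendsto (fun n => (w ν β z₀ n).im) atTop (𝓝 l) := by
  rcases tendsto_of_monotone (w_im_mono ν β hz₀) with h | h
  swap
  · exact h
  exfalso
  set y : ℕ → ℝ := fun n => (w ν β z₀ n).im with hy
  have hβpos : 0 < |β| := abs_pos.2 hβ
  obtain ⟨N, hN⟩ := (h.eventually_ge_atTop (2 * Mnu ν / |β| + 1)).exists
  set Y : ℝ := y N with hY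
  have hYpos : 0 < Y := w_im_pos ν β hz₀ N
  have hIb : ∀ n, N ≤ n → ‖Iz ν (w ν β z₀ n)‖ ≤ |β| / 2 := by
    intro n hn
    calc ‖Iz ν (w ν β z₀ n)‖ ≤ Mnu ν / (w ν β z₀ n).im :=
          norm_Iz_le' ν (w_im_pos ν β hz₀ n)
    _ ≤ |β| / 2 := by
      have h1 : Y ≤ y n := w_im_mono ν β hz₀ hn
      have h2 : 2 * Mnu ν / |β| + 1 ≤ y n := le_trans hN h1
      have h3 : 2 * Mnu ν / |β| ≤ y n := by linarith
      rw [div_le_iff₀ hβpos] at h3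
      have h4 : 0 < y n := w_im_pos ν β hz₀ n
      rw [div_le_div_iff₀ h4 (by norm_num : (0:ℝ) < 2)]
      nlinarith
  set s : ℝ := if 0 < β then 1 else -1 with hs
  have hs1 : s = 1 ∨ s = -1 := by
    rcases lt_or_ge 0 β with h1 | h1
    · left; rw [hs, if_pos h1]
    · right; rw [hs, if_neg (not_lt.2 h1)]
  have hsβ : s * β = |β| := by
    rcases lt_or_ge 0 β with h1 | h1
    · rw [hs, if_pos h1, abs_of_pos h1]; ring
    · rw [hs, if_neg (not_lt.2 h1), abs_of_nonpos h1]; ring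
  have hssq : s * s = 1 := by rcases hs1 with h1 | h1 <;> rw [h1] <;> norm_num
  set d : ℝ := |β| / 2 with hd
  have hdpos : 0 < d := by rw [hd]; positivity
  have hstep : ∀ n, N ≤ n → s * (w ν β z₀ n).re + d ≤ s * (w ν β z₀ (n+1)).re := by
    intro n hn
    have h1 := congrArg Complex.re (w_step ν β (z₀ := z₀) n)
    simp only [Complex.sub_re, Complex.add_re, Complex.ofReal_re] at h1
    have h2 : |(Iz ν (w ν β z₀ n)).re| ≤ |β| / 2 :=
      le_trans (abs_re_le_norm _) (hIb n hn)
    have h3 := abs_le.1 h2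
    have h4 : -(|β|/2) ≤ s * (Iz ν (w ν β z₀ n)).re := by
      rcases hs1 with h5 | h5 <;> rw [h5] <;> nlinarith [h3.1, h3.2]
    have h6 : s * ((w ν β z₀ (n+1)).re - (w ν β z₀ n).re) = s * β + s * (Iz ν (w ν β z₀ n)).re := by
      rw [h1]; ring
    rw [hsβ] at h6
    rw [hd]
    nlinarith [h6]
  set B : ℝ := 2 * ((Y^2)⁻¹ + 2 * (d^2)⁻¹) with hB
  have hKsum : ∀ M : ℕ, ∑ k ∈ Finset.range M, Kz ν (w ν β z₀ (N + k)) ≤ B * Mnu ν := by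
    intro M
    have hexch : ∑ k ∈ Finset.range M, Kz ν (w ν β z₀ (N + k))
        = ∫ t : ℝ, (∑ k ∈ Finset.range M,
            (Complex.normSq ((t:ℂ) - w ν β z₀ (N+k)))⁻¹) ∂ν := by
      simp only [Kz]
      exact (integral_finset_sum _ (fun k _ => integrable_invNormSq ν (w_im_pos ν β hz₀ (N+k)))).symm
    rw [hexch]
    have hptw : ∀ t : ℝ, ∑ k ∈ Finset.range M,
        (Complex.normSq ((t:ℂ) - w ν β z₀ (N+k)))⁻¹ ≤ B := by
      intro t
      set u : ℕ → ℝ := fun k => s * ((w ν β z₀ (N+k)).re - t) with hu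
      have hu' : ∀ k, u k + d ≤ u (k+1) := by
        intro k
        have h7 := hstep (N+k) (Nat.le_add_right N k)
        simp only [hu]
        rw [show N + (k+1) = (N+k)+1 from rfl]
        nlinarith [h7]
      refine le_trans (Finset.sum_le_sum fun k _ => ?_) (spacing_sum hdpos hYpos hu' M)
      apply inv_anti₀ (by positivity)
      rw [normSq_sub']
      have h8 : Y ≤ (w ν β z₀ (N+k)).im := w_im_mono ν β hz₀ (Nat.le_add_right N k)
      have h9 : (u k)^2 = ((w ν β z₀ (N+k)).re - t)^2 := by
        simp only [hu]
        nlinarith [hssq]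
      rw [h9]
      nlinarith
    have hint : Integrable (fun t : ℝ => ∑ k ∈ Finset.range M,
        (Complex.normSq ((t:ℂ) - w ν β z₀ (N+k)))⁻¹) ν :=
      integrable_finset_sum _ (fun k _ => integrable_invNormSq ν (w_im_pos ν β hz₀ (N+k)))
    calc ∫ t : ℝ, (∑ k ∈ Finset.range M,
            (Complex.normSq ((t:ℂ) - w ν β z₀ (N+k)))⁻¹) ∂ν
        ≤ ∫ _t : ℝ, B ∂ν := integral_mono hint (integrable_const B) hptw
    _ = B * Mnu ν := by rw [integral_const, smul_eq_mul, Mnu]; exact mul_comm _ _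
  have hybd : ∀ M : ℕ, y (N + M) ≤ Y * Real.exp (B * Mnu ν) := by
    intro M
    have h1 : y (N + M) ≤ Y * Real.exp (∑ k ∈ Finset.range M, Kz ν (w ν β z₀ (N+k))) := by
      induction M with
      | zero => simp [hY]
      | succ M ih =>
        have hyrec : y (N + (M+1)) = y (N+M) * (1 + Kz ν (w ν β z₀ (N+M))) := by
          rw [show N + (M+1) = (N+M) + 1 from rfl]
          exact w_im_succ ν β hz₀ (N+M)
        rw [hyrec, Finset.sum_range_succ, Real.exp_add]
        have h2 := Real.add_one_le_exp (Kz ν (w ν β z₀ (N+M)))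
        have h3 : (0:ℝ) < Real.exp (∑ k ∈ Finset.range M, Kz ν (w ν β z₀ (N+k))) :=
          Real.exp_pos _
        have h4 : 0 < y (N+M) := w_im_pos ν β hz₀ (N+M)
        have h5 : 0 ≤ Kz ν (w ν β z₀ (N+M)) := Kz_nonneg ν
        calc y (N+M) * (1 + Kz ν (w ν β z₀ (N+M)))
            ≤ (Y * Real.exp (∑ k ∈ Finset.range M, Kz ν (w ν β z₀ (N+k))))
              * (1 + Kz ν (w ν β z₀ (N+M))) :=
              mul_le_mul_of_nonneg_right ih (by linarith)
        _ ≤ (Y * Real.exp (∑ k ∈ Finset.range M, Kz ν (w ν β z₀ (N+k))))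
              * Real.exp (Kz ν (w ν β z₀ (N+M))) := by
              apply mul_le_mul_of_nonneg_left (by linarith) (by positivity)
        _ = Y * (Real.exp (∑ k ∈ Finset.range M, Kz ν (w ν β z₀ (N+k)))
              * Real.exp (Kz ν (w ν β z₀ (N+M)))) := by ring
    calc y (N + M) ≤ Y * Real.exp (∑ k ∈ Finset.range M, Kz ν (w ν β z₀ (N+k))) := h1
    _ ≤ Y * Real.exp (B * Mnu ν) := by
        apply mul_le_mul_of_nonneg_left (Real.exp_le_exp.2 (hKsum M)) hYpos.le
  obtain ⟨n, hn1, hn2⟩ :=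
    ((h.eventually_gt_atTop (Y * Real.exp (B * Mnu ν))).and (eventually_ge_atTop N)).exists
  obtain ⟨M, rfl⟩ := Nat.exists_eq_add_of_le hn2
  exact absurd (hybd M) (not_le.2 hn1)


lemma not_tendsto_rho {β : ℝ} (hβ : β ≠ 0) {z₀ : ℂ} (hz₀ : 0 < z₀.im) :
    ¬ Tendsto (fun n => pseudoHyp (w ν β z₀ (n+1)) (w ν β z₀ n)) atTop (𝓝 0) := by
  intro hρ
  obtain ⟨l, hl⟩ := im_tendsto_of_ne ν hβ hz₀
  have hlge : z₀.im ≤ l :=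
    ge_of_tendsto hl (Eventually.of_forall fun n => w_im_ge ν β hz₀ n)
  have hlpos : 0 < l := lt_of_lt_of_le hz₀ hlge
  have hKto : Tendsto (fun n => Kz ν (w ν β z₀ n)) atTop (𝓝 0) := by
    have h1 : Tendsto (fun n => (w ν β z₀ (n+1)).im) atTop (𝓝 l) :=
      hl.comp (tendsto_add_atTop_nat 1)
    have hdiff : Tendsto
        (fun n => ((w ν β z₀ (n+1)).im - (w ν β z₀ n).im) / z₀.im) atTop (𝓝 0) := by
      have h2 := (h1.sub hl).div_const z₀.im
      simpa using h2
    apply squeeze_zero (fun n => Kz_nonneg ν) (fun n => ?_) hdiff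
    have h3 := w_im_succ ν β hz₀ n
    have h4 := w_im_ge ν β hz₀ n
    have h5 := Kz_nonneg (ν := ν) (z := w ν β z₀ n)
    rw [le_div_iff₀ hz₀, h3]
    nlinarith
  have hIto : Tendsto (fun n => Iz ν (w ν β z₀ n)) atTop (𝓝 0) := by
    rw [NormedAddCommGroup.tendsto_nhds_zero]
    intro δ hδ
    have hM := Mnu_nonneg ν
    set ε : ℝ := δ / (Mnu ν + 1) with hε
    have hεpos : 0 < ε := by rw [hε]; positivity
    have hev : ∀ᶠ n in atTop, Kz ν (w ν β z₀ n) < ε * δ / 2 :=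
      hKto.eventually (gt_mem_nhds (by positivity))
    filter_upwards [hev] with n hn
    have h1 := norm_Iz_le ν (w_im_pos ν β hz₀ n) hεpos
    have h2 : Kz ν (w ν β z₀ n) / ε < δ / 2 := by
      rw [div_lt_iff₀ hεpos]
      nlinarith
    have h3 : ε * Mnu ν < δ := by
      rw [hε, div_mul_eq_mul_div, div_lt_iff₀ (by positivity : (0:ℝ) < Mnu ν + 1)]
      nlinarith
    calc ‖Iz ν (w ν β z₀ n)‖ ≤ (ε * Mnu ν + Kz ν (w ν β z₀ n) / ε) / 2 := h1
    _ < (δ + δ / 2) / 2 := by linarith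
    _ < δ := by linarith
  have hnum : Tendsto (fun n => ‖(β:ℂ) + Iz ν (w ν β z₀ n)‖)
      atTop (𝓝 |β|) := by
    have h1 : Tendsto (fun n => (β:ℂ) + Iz ν (w ν β z₀ n)) atTop (𝓝 ((β:ℂ))) := by
      simpa using tendsto_const_nhds.add hIto
    have h2 := (continuous_norm.tendsto ((β:ℂ))).comp h1
    simpa [Complex.norm_real, Function.comp_def] using h2
  have hform : ∀ n, w ν β z₀ (n+1) - (starRingEnd ℂ) (w ν β z₀ n)
      = (β:ℂ) + Iz ν (w ν β z₀ n) + ((2 * (w ν β z₀ n).im : ℝ) : ℂ) * Complex.I := by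
    intro n
    have h1 := w_step ν β (z₀ := z₀) n
    have h2 := Complex.sub_conj (w ν β z₀ n)
    calc w ν β z₀ (n+1) - (starRingEnd ℂ) (w ν β z₀ n)
        = (w ν β z₀ (n+1) - w ν β z₀ n) + (w ν β z₀ n - (starRingEnd ℂ) (w ν β z₀ n)) := by
          ring
    _ = (β:ℂ) + Iz ν (w ν β z₀ n) + ((2 * (w ν β z₀ n).im : ℝ) : ℂ) * Complex.I := by
          rw [h1, h2]
  set Dc : ℂ := (β:ℂ) + ((2 * l : ℝ) : ℂ) * Complex.I with hDc
  have hDcne : Dc ≠ 0 := by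
    intro h0
    have : Dc.re = 0 := by rw [h0]; simp
    rw [hDc] at this
    simp [Complex.add_re, Complex.mul_re, Complex.I_re, Complex.I_im,
      Complex.ofReal_re, Complex.ofReal_im] at this
    exact hβ this
  have hDpos : 0 < ‖Dc‖ := norm_pos_iff.2 hDcne
  have hden : Tendsto (fun n => ‖w ν β z₀ (n+1) - (starRingEnd ℂ) (w ν β z₀ n)‖)
      atTop (𝓝 (‖Dc‖)) := by
    have h3 : Tendsto (fun n => ((2 * (w ν β z₀ n).im : ℝ) : ℂ)) atTop
        (𝓝 (((2 * l : ℝ) : ℂ))) :=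
      (Complex.continuous_ofReal.tendsto _).comp (hl.const_mul 2)
    have h4 : Tendsto (fun n => (β:ℂ) + Iz ν (w ν β z₀ n)
        + ((2 * (w ν β z₀ n).im : ℝ) : ℂ) * Complex.I) atTop (𝓝 Dc) := by
      rw [hDc]
      have h5 : Tendsto (fun n => (β:ℂ) + Iz ν (w ν β z₀ n)) atTop (𝓝 ((β:ℂ))) := by
        simpa using tendsto_const_nhds.add hIto
      simpa using h5.add (h3.mul_const Complex.I)
    have h6 := (continuous_norm.tendsto Dc).comp h4
    simp only [Function.comp_def] at h6 ⊢
    refine Tendsto.congr (fun n => ?_) h6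
    rw [← hform n]
  have hlim : Tendsto (fun n => pseudoHyp (w ν β z₀ (n+1)) (w ν β z₀ n)) atTop
      (𝓝 (|β| / ‖Dc‖)) := by
    have h7 := hnum.div hden hDpos.ne'
    refine Tendsto.congr (fun n => ?_) h7
    rw [rho_eq]
    simp [Pi.div_apply]
  have h8 := tendsto_nhds_unique hρ hlim
  have h9 : 0 < |β| / ‖Dc‖ := div_pos (abs_pos.2 hβ) hDpos
  rw [← h8] at h9
  exact lt_irrefl 0 h9

lemma zeroHS_of_beta_zero (hν : ν ≠ 0) : ZeroHS (gmap 0 ν) := by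
  refine ⟨Complex.I, by simp, ?_⟩
  have hz₀ : (0:ℝ) < (Complex.I).im := by simp
  have hto := im_tendsto_atTop ν hν hz₀
  have hρnn : ∀ n : ℕ, 0 ≤ pseudoHyp ((gmap 0 ν)^[n+1] Complex.I) ((gmap 0 ν)^[n] Complex.I) :=
    fun n => div_nonneg (norm_nonneg _) (norm_nonneg _)
  have hbound : ∀ n : ℕ, pseudoHyp ((gmap 0 ν)^[n+1] Complex.I) ((gmap 0 ν)^[n] Complex.I)
      ≤ Mnu ν * ((w ν 0 Complex.I n).im * (2 * (w ν 0 Complex.I n).im))⁻¹ := by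
    intro n
    have h1 := rho_eq ν 0 (z₀ := Complex.I) n
    rw [show (gmap 0 ν)^[n+1] Complex.I = w ν 0 Complex.I (n+1) from rfl,
        show (gmap 0 ν)^[n] Complex.I = w ν 0 Complex.I n from rfl, h1]
    have hypos : 0 < (w ν 0 Complex.I n).im := w_im_pos ν 0 hz₀ n
    have hnum : ‖((0:ℝ):ℂ) + Iz ν (w ν 0 Complex.I n)‖ ≤ Mnu ν / (w ν 0 Complex.I n).im := by
      rw [show (((0:ℝ):ℂ) + Iz ν (w ν 0 Complex.I n)) = Iz ν (w ν 0 Complex.I n) by simp]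
      exact norm_Iz_le' ν hypos
    have hden := w_denom_ge ν 0 hz₀ n
    calc ‖((0:ℝ):ℂ) + Iz ν (w ν 0 Complex.I n)‖
          / ‖w ν 0 Complex.I (n+1) - (starRingEnd ℂ) (w ν 0 Complex.I n)‖
        ≤ (Mnu ν / (w ν 0 Complex.I n).im) / (2 * (w ν 0 Complex.I n).im) :=
          div_le_div₀ (div_nonneg (Mnu_nonneg ν) hypos.le) hnum (by linarith) hden
    _ = Mnu ν * ((w ν 0 Complex.I n).im * (2 * (w ν 0 Complex.I n).im))⁻¹ := by
          rw [div_div, div_eq_mul_inv]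
  have h2 : Tendsto (fun n => (w ν 0 Complex.I n).im * (2 * (w ν 0 Complex.I n).im))
      atTop atTop :=
    hto.atTop_mul_atTop₀ (hto.const_mul_atTop (by norm_num : (0:ℝ) < 2))
  have h4 : Tendsto (fun n => Mnu ν
      * ((w ν 0 Complex.I n).im * (2 * (w ν 0 Complex.I n).im))⁻¹) atTop (𝓝 0) := by
    have h5 := (h2.inv_tendsto_atTop).const_mul (Mnu ν)
    simpa using h5
  exact squeeze_zero hρnn hbound h4


end Stmt6Aux

open Stmt6Aux in
theorem stmt_6 (β : ℝ) (ν : Measure ℝ) [IsFiniteMeasure ν]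
    (hnz : ¬ (β = 0 ∧ ν = 0)) :
    (∀ z : ℂ, 0 < z.im → 0 < (gmap β ν z).im) ∧
    (ZeroHS (gmap β ν) ↔ β = 0) := by
  refine ⟨fun z hz => gmap_im_pos ν β hz, ?_, ?_⟩
  · intro hZ
    by_contra hβ
    obtain ⟨z, hz, hρ⟩ := hZ
    exact not_tendsto_rho ν hβ hz hρ
  · intro hβ
    subst hβ
    exact zeroHS_of_beta_zero ν (fun h => hnz ⟨rfl, h⟩)
end

section
/- Let f(z) = z + β + ∫_ℝ (1+tz)/(t−z) dμ(t) on the upper half-plane H, where μ is a symmetric finite positive Borel measure with ∫_ℝ |t| dμ(t) = ∞ and β ≠ 0. Then for every z₀ ∈ H, the sequence y_n = Im f^n(z₀) tends to +∞. -/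
open MeasureTheory Filter Complex Topology

/-- The parabolic self-map of the upper half-plane associated to `β` and `μ`:
`f(z) = z + β + ∫ (1+tz)/(t−z) dμ(t)`. -/
noncomputable def fmap (β : ℝ) (μ : Measure ℝ) (z : ℂ) : ℂ :=
  z + (β : ℂ) + ∫ t : ℝ, (1 + (t : ℂ) * z) / ((t : ℂ) - z) ∂μ

lemma tz_ne (z : ℂ) (hz : z.im ≠ 0) (t : ℝ) : (t : ℂ) - z ≠ 0 := by
  intro h
  apply hz
  have : ((t : ℂ) - z).im = 0 := by rw [h]; simp
  simpa using this

lemma normSq_tz_pos (z : ℂ) (hz : z.im ≠ 0) (t : ℝ) :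
    0 < Complex.normSq ((t : ℂ) - z) := by
  rw [Complex.normSq_pos]; exact tz_ne z hz t

lemma normSq_tz (z : ℂ) (t : ℝ) :
    Complex.normSq ((t : ℂ) - z) = (t - z.re)^2 + z.im^2 := by
  simp [Complex.normSq_apply, Complex.sub_re, Complex.sub_im]
  ring

lemma key_bound (z : ℂ) (hz : z.im ≠ 0) :
    ∃ C : ℝ, 0 < C ∧ ∀ t : ℝ, 1 + t^2 ≤ C * Complex.normSq ((t : ℂ) - z) := by
  have hy : 0 < z.im ^ 2 := by positivity
  set R : ℝ := 2*|z.re| + 2 with hRdef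
  have hR : 0 < R := by positivity
  refine ⟨max ((1+R^2)/z.im^2) 5, lt_max_of_lt_right (by norm_num), fun t => ?_⟩
  have hN := normSq_tz z t
  have hNpos := normSq_tz_pos z hz t
  rcases le_or_gt |t| R with h | h
  · have h1 : 1 + t^2 ≤ 1 + R^2 := by nlinarith [_root_.sq_abs t, abs_nonneg t]
    have h2 : (1+R^2)/z.im^2 * Complex.normSq ((t:ℂ)-z) ≥ 1 + t^2 := by
      rw [hN]
      have h3 : (1+R^2)/z.im^2 * z.im^2 = 1+R^2 := by field_simp
      nlinarith [sq_nonneg (t - z.re), div_nonneg (by nlinarith : (0:ℝ) ≤ 1+R^2) hy.le]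
    calc 1 + t^2 ≤ (1+R^2)/z.im^2 * Complex.normSq ((t:ℂ)-z) := h2
      _ ≤ max ((1+R^2)/z.im^2) 5 * Complex.normSq ((t:ℂ)-z) :=
        mul_le_mul_of_nonneg_right (le_max_left _ _) hNpos.le
  · have h2 : |t| - |z.re| ≤ |t - z.re| := abs_sub_abs_le_abs_sub t z.re
    have h3 : 1 + t^2 ≤ 5 * Complex.normSq ((t:ℂ)-z) := by
      rw [hN]
      nlinarith [_root_.sq_abs t, _root_.sq_abs (t - z.re), abs_nonneg z.re, abs_nonneg t, abs_nonneg (t - z.re)]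
    calc 1 + t^2 ≤ 5 * Complex.normSq ((t:ℂ)-z) := h3
      _ ≤ max ((1+R^2)/z.im^2) 5 * Complex.normSq ((t:ℂ)-z) :=
        mul_le_mul_of_nonneg_right (le_max_right _ _) hNpos.le

/-- real Poisson-type kernel -/
noncomputable def Pker (z : ℂ) (t : ℝ) : ℝ := (1 + t^2) / Complex.normSq ((t:ℂ) - z)

/-- complex kernel -/
noncomputable def Kker (z w : ℂ) (t : ℝ) : ℂ :=
  (1 + (t:ℂ)^2) / (((t:ℂ) - z) * ((t:ℂ) - w))

noncomputable def Pint (μ : Measure ℝ) (z : ℂ) : ℝ := ∫ t, Pker z t ∂μ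

noncomputable def Kint (μ : Measure ℝ) (z w : ℂ) : ℂ := 1 + ∫ t, Kker z w t ∂μ

lemma Pker_nonneg (z : ℂ) (t : ℝ) : 0 ≤ Pker z t :=
  div_nonneg (by positivity) (Complex.normSq_nonneg _)

lemma Pker_cont (z : ℂ) (hz : z.im ≠ 0) : Continuous (Pker z) := by
  apply Continuous.div (by continuity) (by continuity)
  intro t
  exact (normSq_tz_pos z hz t).ne'

lemma Kker_cont (z w : ℂ) (hz : z.im ≠ 0) (hw : w.im ≠ 0) : Continuous (Kker z w) := by
  apply Continuous.div (by continuity) (by continuity)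
  intro t
  exact mul_ne_zero (tz_ne z hz t) (tz_ne w hw t)

lemma abs_Kker (z w : ℂ) (t : ℝ) :
    ‖Kker z w t‖ = (1 + t^2) / (‖(t:ℂ) - z‖ * ‖(t:ℂ) - w‖) := by
  unfold Kker
  rw [norm_div, norm_mul]
  congr 1
  have : ((1 : ℂ) + (t:ℂ)^2) = ((1 + t^2 : ℝ) : ℂ) := by push_cast; ring
  rw [this, Complex.norm_real, Real.norm_eq_abs, _root_.abs_of_nonneg (by positivity)]

lemma Pker_integrable (μ : Measure ℝ) [IsFiniteMeasure μ] (z : ℂ) (hz : z.im ≠ 0) :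
    Integrable (Pker z) μ := by
  obtain ⟨C, hC, hCb⟩ := key_bound z hz
  refine (integrable_const C).mono' ((Pker_cont z hz).aestronglyMeasurable) ?_
  refine Eventually.of_forall fun t => ?_
  rw [Real.norm_eq_abs, _root_.abs_of_nonneg (Pker_nonneg z t)]
  unfold Pker
  rw [div_le_iff₀ (normSq_tz_pos z hz t)]
  exact hCb t

lemma Kker_integrable (μ : Measure ℝ) [IsFiniteMeasure μ] (z w : ℂ)
    (hz : z.im ≠ 0) (hw : w.im ≠ 0) :
    Integrable (Kker z w) μ := by
  obtain ⟨C, hC, hCb⟩ := key_bound z hz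
  obtain ⟨D, hD, hDb⟩ := key_bound w hw
  refine (integrable_const (Real.sqrt (C*D))).mono'
    ((Kker_cont z w hz hw).aestronglyMeasurable) ?_
  refine Eventually.of_forall fun t => ?_
  rw [abs_Kker]
  have haz : 0 < ‖(t:ℂ) - z‖ := norm_pos_iff.mpr (tz_ne z hz t)
  have haw : 0 < ‖(t:ℂ) - w‖ := norm_pos_iff.mpr (tz_ne w hw t)
  rw [div_le_iff₀ (by positivity)]
  have h1 : (1+t^2)^2 ≤ (C*D) * (‖(t:ℂ)-z‖ * ‖(t:ℂ)-w‖)^2 := by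
    have e1 := hCb t
    have e2 := hDb t
    rw [← Complex.sq_norm] at e1 e2
    nlinarith [sq_nonneg (1+t^2), haz.le, haw.le]
  have h2 := Real.sqrt_le_sqrt h1
  rw [Real.sqrt_sq (by positivity), Real.sqrt_mul (by positivity),
    Real.sqrt_sq (by positivity)] at h2
  exact h2

lemma im_g (z : ℂ) (hz : z.im ≠ 0) (t : ℝ) :
    ((1 + (t:ℂ) * z) / ((t:ℂ) - z)).im = z.im * Pker z t := by
  rw [Complex.div_im]
  unfold Pker
  have h : ((t:ℂ) - z).re = t - z.re := by simp
  have h2 : ((t:ℂ) - z).im = - z.im := by simp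
  have h3 : ((1:ℂ) + (t:ℂ)*z).im = t * z.im := by simp
  have h4 : ((1:ℂ) + (t:ℂ)*z).re = 1 + t * z.re := by simp
  rw [h, h2, h3, h4]
  have hN := (normSq_tz_pos z hz t).ne'
  field_simp
  ring

lemma g_integrable (μ : Measure ℝ) [IsFiniteMeasure μ] (z : ℂ) (hz : z.im ≠ 0) :
    Integrable (fun t : ℝ => (1 + (t:ℂ) * z) / ((t:ℂ) - z)) μ := by
  obtain ⟨C, hC, hCb⟩ := key_bound z hz
  have hcont : Continuous (fun t : ℝ => (1 + (t:ℂ) * z) / ((t:ℂ) - z)) := by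
    apply Continuous.div (by continuity) (by continuity)
    intro t; exact tz_ne z hz t
  refine (integrable_const (Real.sqrt (C * (1 + Complex.normSq z)))).mono'
    hcont.aestronglyMeasurable ?_
  refine Eventually.of_forall fun t => ?_
  have haz : 0 < ‖(t:ℂ) - z‖ := norm_pos_iff.mpr (tz_ne z hz t)
  have hnum : Complex.normSq (1 + (t:ℂ)*z) ≤ (1 + t^2) * (1 + Complex.normSq z) := by
    simp [Complex.normSq_apply, Complex.add_re, Complex.add_im, Complex.mul_re,
      Complex.mul_im]
    nlinarith [sq_nonneg (t - z.re), sq_nonneg z.im]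
  have hden := hCb t
  have h1 : ‖(1 + (t:ℂ)*z) / ((t:ℂ) - z)‖^2 ≤ C * (1 + Complex.normSq z) := by
    rw [norm_div, div_pow, Complex.sq_norm, Complex.sq_norm]
    rw [div_le_iff₀ (normSq_tz_pos z hz t)]
    calc Complex.normSq (1 + (t:ℂ)*z) ≤ (1 + t^2) * (1 + Complex.normSq z) := hnum
      _ ≤ (C * Complex.normSq ((t:ℂ)-z)) * (1 + Complex.normSq z) := by
          apply mul_le_mul_of_nonneg_right hden
          nlinarith [Complex.normSq_nonneg z]
      _ = C * (1 + Complex.normSq z) * Complex.normSq ((t:ℂ)-z) := by ring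
  have h2 := Real.sqrt_le_sqrt h1
  rwa [Real.sqrt_sq (norm_nonneg _)] at h2

lemma fmap_im (β : ℝ) (μ : Measure ℝ) [IsFiniteMeasure μ] (z : ℂ) (hz : z.im ≠ 0) :
    (fmap β μ z).im = z.im * (1 + Pint μ z) := by
  unfold fmap
  rw [Complex.add_im, Complex.add_im]
  have h1 : (∫ t : ℝ, (1 + (t:ℂ) * z) / ((t:ℂ) - z) ∂μ).im
      = ∫ t : ℝ, ((1 + (t:ℂ) * z) / ((t:ℂ) - z)).im ∂μ :=
    (integral_im (g_integrable μ z hz)).symm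
  rw [h1]
  have h2 : ∫ t : ℝ, ((1 + (t:ℂ) * z) / ((t:ℂ) - z)).im ∂μ = z.im * Pint μ z := by
    unfold Pint
    rw [← integral_const_mul]
    exact integral_congr_ae (Eventually.of_forall fun t => im_g z hz t)
  rw [h2]
  simp
  ring

lemma Pint_nonneg (μ : Measure ℝ) (z : ℂ) : 0 ≤ Pint μ z :=
  integral_nonneg (Pker_nonneg z)

lemma fmap_sub (β : ℝ) (μ : Measure ℝ) [IsFiniteMeasure μ] (z w : ℂ)
    (hz : z.im ≠ 0) (hw : w.im ≠ 0) :
    fmap β μ z - fmap β μ w = (z - w) * Kint μ z w := by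
  have hpt : ∀ t : ℝ, (1 + (t:ℂ)*z)/((t:ℂ)-z) - (1 + (t:ℂ)*w)/((t:ℂ)-w)
      = (z - w) * Kker z w t := by
    intro t
    unfold Kker
    have h1 := tz_ne z hz t
    have h2 := tz_ne w hw t
    field_simp
    ring
  have h4 : (∫ t : ℝ, (1 + (t:ℂ)*z)/((t:ℂ)-z) ∂μ) - (∫ t : ℝ, (1 + (t:ℂ)*w)/((t:ℂ)-w) ∂μ)
      = (z - w) * ∫ t, Kker z w t ∂μ := by
    rw [← integral_sub (g_integrable μ z hz) (g_integrable μ w hw), ← integral_const_mul]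
    exact integral_congr_ae (Eventually.of_forall hpt)
  unfold fmap Kint
  have : ∀ a b I J : ℂ, I - J = (z-w)*(∫ t, Kker z w t ∂μ) →
      (z + a + I) - (w + b + J) = (z - w) + (z-w)*(∫ t, Kker z w t ∂μ) → True := fun _ _ _ _ _ _ => trivial
  calc (z + β + ∫ t : ℝ, (1 + (t:ℂ)*z)/((t:ℂ)-z) ∂μ) - (w + β + ∫ t : ℝ, (1 + (t:ℂ)*w)/((t:ℂ)-w) ∂μ)
      = (z - w) + ((∫ t : ℝ, (1 + (t:ℂ)*z)/((t:ℂ)-z) ∂μ) - (∫ t : ℝ, (1 + (t:ℂ)*w)/((t:ℂ)-w) ∂μ)) := by ring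
    _ = (z - w) + (z - w) * ∫ t, Kker z w t ∂μ := by rw [h4]
    _ = (z - w) * (1 + ∫ t, Kker z w t ∂μ) := by ring

lemma conj_fmap (β : ℝ) (μ : Measure ℝ) [IsFiniteMeasure μ] (w : ℂ) :
    (starRingEnd ℂ) (fmap β μ w) = fmap β μ ((starRingEnd ℂ) w) := by
  unfold fmap
  rw [map_add, map_add, ← integral_conj]
  congr 1
  · congr 1
    exact Complex.conj_ofReal β
  · refine integral_congr_ae (Eventually.of_forall fun t => ?_)
    simp only
    rw [map_div₀, map_add, map_sub, map_mul, map_one, Complex.conj_ofReal]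

lemma Kint_self (μ : Measure ℝ) [IsFiniteMeasure μ] (z : ℂ) :
    Kint μ z ((starRingEnd ℂ) z) = ((1 + Pint μ z : ℝ) : ℂ) := by
  unfold Kint Pint
  push_cast
  congr 1
  calc ∫ t, Kker z ((starRingEnd ℂ) z) t ∂μ
      = ∫ t : ℝ, ((Pker z t : ℝ) : ℂ) ∂μ := by
        refine integral_congr_ae (Eventually.of_forall fun t => ?_)
        unfold Kker Pker
        have h1 : ((t:ℂ) - z) * ((t:ℂ) - (starRingEnd ℂ) z)
            = ((Complex.normSq ((t:ℂ) - z) : ℝ) : ℂ) := by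
          rw [← Complex.mul_conj]
          congr 1
          rw [map_sub, Complex.conj_ofReal]
        rw [h1]
        push_cast
        ring
    _ = ((∫ t, Pker z t ∂μ : ℝ) : ℂ) := integral_ofReal

lemma Kint_cs (μ : Measure ℝ) [IsFiniteMeasure μ] (z w : ℂ) (hz : z.im ≠ 0) (hw : w.im ≠ 0) :
    (‖Kint μ z ((starRingEnd ℂ) w)‖)^2 ≤ (1 + Pint μ z) * (1 + Pint μ w) := by
  have ha : 0 ≤ Pint μ z := Pint_nonneg μ z
  have hb : 0 ≤ Pint μ w := Pint_nonneg μ w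
  have hwc : ((starRingEnd ℂ) w).im ≠ 0 := by
    rw [Complex.conj_im]; simpa using hw
  set F : ℝ → ℝ := fun t => Real.sqrt (1+t^2) / ‖(t:ℂ) - z‖ with hF
  set G : ℝ → ℝ := fun t => Real.sqrt (1+t^2) / ‖(t:ℂ) - w‖ with hG
  have hFn : ∀ t, 0 ≤ F t := fun t => div_nonneg (Real.sqrt_nonneg _) (norm_nonneg _)
  have hGn : ∀ t, 0 ≤ G t := fun t => div_nonneg (Real.sqrt_nonneg _) (norm_nonneg _)
  have hFsq : ∀ t, F t ^ 2 = Pker z t := by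
    intro t
    rw [hF]
    simp only
    rw [div_pow, Real.sq_sqrt (by positivity), Complex.sq_norm]
    rfl
  have hGsq : ∀ t, G t ^ 2 = Pker w t := by
    intro t
    rw [hG]
    simp only
    rw [div_pow, Real.sq_sqrt (by positivity), Complex.sq_norm]
    rfl
  have hFc : Continuous F := by
    apply Continuous.div (by continuity) (continuous_norm.comp (by continuity))
    intro t
    exact (norm_pos_iff.mpr (tz_ne z hz t)).ne'
  have hGc : Continuous G := by
    apply Continuous.div (by continuity) (continuous_norm.comp (by continuity))
    intro t
    exact (norm_pos_iff.mpr (tz_ne w hw t)).ne'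
  obtain ⟨C, hC, hCb⟩ := key_bound z hz
  obtain ⟨D, hD, hDb⟩ := key_bound w hw
  have hFb : ∀ t, F t ≤ Real.sqrt C := by
    intro t
    have h1 : F t ^ 2 ≤ C := by
      rw [hFsq t]
      unfold Pker
      rw [div_le_iff₀ (normSq_tz_pos z hz t)]
      exact hCb t
    have := Real.sqrt_le_sqrt h1
    rwa [Real.sqrt_sq (hFn t)] at this
  have hGb : ∀ t, G t ≤ Real.sqrt D := by
    intro t
    have h1 : G t ^ 2 ≤ D := by
      rw [hGsq t]
      unfold Pker
      rw [div_le_iff₀ (normSq_tz_pos w hw t)]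
      exact hDb t
    have := Real.sqrt_le_sqrt h1
    rwa [Real.sqrt_sq (hGn t)] at this
  -- Hölder / Cauchy-Schwarz
  have hpq : Real.HolderConjugate 2 2 := Real.HolderConjugate.two_two
  have hFm : MemLp F (ENNReal.ofReal 2) μ :=
    MemLp.of_bound hFc.aestronglyMeasurable (Real.sqrt C)
      (Eventually.of_forall fun t => by
        rw [Real.norm_eq_abs, _root_.abs_of_nonneg (hFn t)]; exact hFb t)
  have hGm : MemLp G (ENNReal.ofReal 2) μ :=
    MemLp.of_bound hGc.aestronglyMeasurable (Real.sqrt D)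
      (Eventually.of_forall fun t => by
        rw [Real.norm_eq_abs, _root_.abs_of_nonneg (hGn t)]; exact hGb t)
  have hCS := integral_mul_le_Lp_mul_Lq_of_nonneg hpq
    (Eventually.of_forall hFn) (Eventually.of_forall hGn) hFm hGm
  have hrw2 : ∀ x : ℝ, x ^ (2:ℝ) = x ^ 2 := fun x => by
    rw [show (2:ℝ) = ((2:ℕ):ℝ) by norm_num, Real.rpow_natCast]
  have hCS2 : ∫ t, F t * G t ∂μ ≤ Real.sqrt (Pint μ z) * Real.sqrt (Pint μ w) := by
    have e1 : ∫ t, F t ^ (2:ℝ) ∂μ = Pint μ z := by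
      unfold Pint
      exact integral_congr_ae (Eventually.of_forall fun t => by simp only [hrw2, hFsq])
    have e2 : ∫ t, G t ^ (2:ℝ) ∂μ = Pint μ w := by
      unfold Pint
      exact integral_congr_ae (Eventually.of_forall fun t => by simp only [hrw2, hGsq])
    rw [e1, e2] at hCS
    rw [Real.sqrt_eq_rpow, Real.sqrt_eq_rpow]
    exact hCS
  -- bound |Kint| by 1 + ∫ F G
  have habs : ‖Kint μ z ((starRingEnd ℂ) w)‖ ≤ 1 + ∫ t, F t * G t ∂μ := by
    unfold Kint
    calc ‖1 + ∫ t, Kker z ((starRingEnd ℂ) w) t ∂μ‖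
        ≤ ‖1‖ + ‖∫ t, Kker z ((starRingEnd ℂ) w) t ∂μ‖ :=
          norm_add_le _ _
      _ = 1 + ‖∫ t, Kker z ((starRingEnd ℂ) w) t ∂μ‖ := by rw [norm_one]
      _ ≤ 1 + ∫ t, ‖Kker z ((starRingEnd ℂ) w) t‖ ∂μ := by
          apply add_le_add_right
          exact norm_integral_le_integral_norm _
      _ = 1 + ∫ t, F t * G t ∂μ := by
          congr 1
          refine integral_congr_ae (Eventually.of_forall fun t => ?_)
          show ‖Kker z ((starRingEnd ℂ) w) t‖ = F t * G t
          rw [abs_Kker]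
          have hcw : ‖(t:ℂ) - (starRingEnd ℂ) w‖ = ‖(t:ℂ) - w‖ := by
            rw [show (t:ℂ) - (starRingEnd ℂ) w = (starRingEnd ℂ) ((t:ℂ) - w) by
              rw [map_sub, Complex.conj_ofReal]]
            exact Complex.norm_conj _
          rw [hcw, hF, hG]
          simp only
          rw [div_mul_div_comm, Real.mul_self_sqrt (by positivity)]
  have hKnn := norm_nonneg (Kint μ z ((starRingEnd ℂ) w))
  have hfin : ‖Kint μ z ((starRingEnd ℂ) w)‖
      ≤ 1 + Real.sqrt (Pint μ z) * Real.sqrt (Pint μ w) := habs.trans (by linarith)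
  have h1 : (‖Kint μ z ((starRingEnd ℂ) w)‖)^2
      ≤ (1 + Real.sqrt (Pint μ z) * Real.sqrt (Pint μ w))^2 := by
    apply pow_le_pow_left₀ hKnn hfin
  refine h1.trans ?_
  nlinarith [Real.sq_sqrt ha, Real.sq_sqrt hb, Real.sqrt_nonneg (Pint μ z),
    Real.sqrt_nonneg (Pint μ w), sq_nonneg (Real.sqrt (Pint μ z) - Real.sqrt (Pint μ w))]

lemma normSq_conj_id (z w : ℂ) :
    Complex.normSq (z - (starRingEnd ℂ) w) = Complex.normSq (z - w) + 4 * z.im * w.im := by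
  simp [Complex.normSq_apply, Complex.sub_re, Complex.sub_im]
  ring

lemma pseudoHyp_lt_one (z w : ℂ) (hz : 0 < z.im) (hw : 0 < w.im) :
    pseudoHyp z w < 1 := by
  have h1 : Complex.normSq (z - (starRingEnd ℂ) w) = Complex.normSq (z - w) + 4 * z.im * w.im :=
    normSq_conj_id z w
  have h2 : Complex.normSq (z - w) < Complex.normSq (z - (starRingEnd ℂ) w) := by
    rw [h1]; nlinarith
  have h3 : 0 < ‖z - (starRingEnd ℂ) w‖ := by
    have : 0 < Complex.normSq (z - (starRingEnd ℂ) w) := by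
      rw [h1]; nlinarith [Complex.normSq_nonneg (z - w)]
    rw [← Complex.sq_norm] at this
    nlinarith [norm_nonneg (z - (starRingEnd ℂ) w)]
  rw [pseudoHyp, div_lt_one h3]
  have h4 := Complex.sq_norm (z - w)
  have h5 := Complex.sq_norm (z - (starRingEnd ℂ) w)
  nlinarith [norm_nonneg (z - w), norm_nonneg (z - (starRingEnd ℂ) w)]

lemma contraction (β : ℝ) (μ : Measure ℝ) [IsFiniteMeasure μ] (z w : ℂ)
    (hz : 0 < z.im) (hw : 0 < w.im) :
    pseudoHyp (fmap β μ z) (fmap β μ w) ≤ pseudoHyp z w := by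
  set a : ℝ := 1 + Pint μ z with hadef
  set b : ℝ := 1 + Pint μ w with hbdef
  have ha : 1 ≤ a := by have := Pint_nonneg μ z; simp [hadef]; linarith
  have hb : 1 ≤ b := by have := Pint_nonneg μ w; simp [hbdef]; linarith
  have himz : (fmap β μ z).im = z.im * a := fmap_im β μ z hz.ne'
  have himw : (fmap β μ w).im = w.im * b := fmap_im β μ w hw.ne'
  set K : ℂ := Kint μ z ((starRingEnd ℂ) w) with hKdef
  have hwc : ((starRingEnd ℂ) w).im ≠ 0 := by rw [Complex.conj_im]; simpa using hw.ne'
  have hD : fmap β μ z - (starRingEnd ℂ) (fmap β μ w) = (z - (starRingEnd ℂ) w) * K := by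
    rw [conj_fmap β μ w]
    exact fmap_sub β μ z ((starRingEnd ℂ) w) hz.ne' hwc
  have hK2 : (‖K‖)^2 ≤ a * b := Kint_cs μ z w hz.ne' hw.ne'
  -- identities
  have hid1 : Complex.normSq (fmap β μ z - (starRingEnd ℂ) (fmap β μ w))
      = Complex.normSq (fmap β μ z - fmap β μ w) + 4 * (z.im * a) * (w.im * b) := by
    rw [normSq_conj_id, himz, himw]
  have hid2 : Complex.normSq (z - (starRingEnd ℂ) w)
      = Complex.normSq (z - w) + 4 * z.im * w.im := normSq_conj_id z w
  have hmul : Complex.normSq (fmap β μ z - (starRingEnd ℂ) (fmap β μ w))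
      = Complex.normSq (z - (starRingEnd ℂ) w) * (‖K‖)^2 := by
    rw [hD, Complex.normSq_mul, Complex.sq_norm]
  -- positivity
  have hNSb : 0 < Complex.normSq (z - (starRingEnd ℂ) w) := by
    rw [hid2]; nlinarith [Complex.normSq_nonneg (z - w)]
  have ha0 : (0:ℝ) < a := lt_of_lt_of_le one_pos ha
  have hb0 : (0:ℝ) < b := lt_of_lt_of_le one_pos hb
  have hNSb' : 0 < Complex.normSq (fmap β μ z - (starRingEnd ℂ) (fmap β μ w)) := by
    rw [hid1]
    nlinarith [Complex.normSq_nonneg (fmap β μ z - fmap β μ w),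
      mul_pos (mul_pos hz ha0) (mul_pos hw hb0)]
  -- cross-multiplied inequality on normSq
  have hcross : Complex.normSq (fmap β μ z - fmap β μ w) * Complex.normSq (z - (starRingEnd ℂ) w)
      ≤ Complex.normSq (z - w) * Complex.normSq (fmap β μ z - (starRingEnd ℂ) (fmap β μ w)) := by
    have e1 : Complex.normSq (fmap β μ z - fmap β μ w)
        = Complex.normSq (z - (starRingEnd ℂ) w) * (‖K‖)^2
          - 4 * (z.im * a) * (w.im * b) := by
      rw [← hmul]; linarith [hid1]
    have e2 : Complex.normSq (z - w)
        = Complex.normSq (z - (starRingEnd ℂ) w) - 4 * z.im * w.im := by linarith [hid2]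
    rw [e1, e2, hmul]
    nlinarith [mul_nonneg (mul_nonneg (sub_nonneg.2 hK2) (mul_pos hz hw).le) hNSb.le]
  -- convert to abs inequality
  have habs1 : 0 < ‖z - (starRingEnd ℂ) w‖ := by
    rw [← Complex.sq_norm] at hNSb
    nlinarith [norm_nonneg (z - (starRingEnd ℂ) w)]
  have habs2 : 0 < ‖fmap β μ z - (starRingEnd ℂ) (fmap β μ w)‖ := by
    rw [← Complex.sq_norm] at hNSb'
    nlinarith [norm_nonneg (fmap β μ z - (starRingEnd ℂ) (fmap β μ w))]
  rw [pseudoHyp, pseudoHyp, div_le_div_iff₀ habs2 habs1]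
  have hsq : (‖fmap β μ z - fmap β μ w‖ * ‖z - (starRingEnd ℂ) w‖)^2
      ≤ (‖z - w‖ * ‖fmap β μ z - (starRingEnd ℂ) (fmap β μ w)‖)^2 := by
    rw [mul_pow, mul_pow, Complex.sq_norm, Complex.sq_norm, Complex.sq_norm, Complex.sq_norm]
    exact hcross
  have := Real.sqrt_le_sqrt hsq
  rwa [Real.sqrt_sq (by positivity), Real.sqrt_sq (by positivity)] at this

lemma abs_sub_le_of_pseudoHyp (u v : ℂ) (hv : 0 < v.im) {r : ℝ} (hr : r < 1)
    (h : pseudoHyp u v ≤ r) (hd : 0 < ‖u - (starRingEnd ℂ) v‖) :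
    ‖u - v‖ ≤ 2 * r * v.im / (1 - r) := by
  have h1 : ‖u - v‖ ≤ r * ‖u - (starRingEnd ℂ) v‖ := by
    rw [pseudoHyp, div_le_iff₀ hd] at h
    exact h
  have h2 : ‖v - (starRingEnd ℂ) v‖ = 2 * v.im := by
    have : v - (starRingEnd ℂ) v = Complex.I * (2 * v.im) := by
      apply Complex.ext <;> simp <;> ring
    rw [this, norm_mul, Complex.norm_I, one_mul]
    have : ((2:ℂ) * v.im) = ((2 * v.im : ℝ) : ℂ) := by push_cast; ring
    rw [this, Complex.norm_real, Real.norm_eq_abs, _root_.abs_of_nonneg (by linarith)]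
  have h3 : ‖u - (starRingEnd ℂ) v‖
      ≤ ‖u - v‖ + 2 * v.im := by
    calc ‖u - (starRingEnd ℂ) v‖
        = ‖(u - v) + (v - (starRingEnd ℂ) v)‖ := by ring_nf
      _ ≤ ‖u - v‖ + ‖v - (starRingEnd ℂ) v‖ := norm_add_le _ _
      _ = ‖u - v‖ + 2 * v.im := by rw [h2]
  have hr0 : 0 ≤ r := le_trans (div_nonneg (norm_nonneg _) (norm_nonneg _)) h
  have h4 : ‖u - v‖ ≤ r * (‖u - v‖ + 2 * v.im) :=
    h1.trans (mul_le_mul_of_nonneg_left h3 hr0)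
  rw [le_div_iff₀ (by linarith)]
  nlinarith

lemma fmap_im_pos (β : ℝ) (μ : Measure ℝ) [IsFiniteMeasure μ] (z : ℂ) (hz : 0 < z.im) :
    0 < (fmap β μ z).im := by
  rw [fmap_im β μ z hz.ne']
  have := Pint_nonneg μ z
  nlinarith

lemma tails_top (μ : Measure ℝ) [IsFiniteMeasure μ]
    (hsym : ∀ A : Set ℝ, MeasurableSet A → μ A = μ ((fun t : ℝ => -t) ⁻¹' A))
    (hμ : ¬ Integrable (fun t : ℝ => t) μ) (T : ℝ) :
    (∫⁻ t in Set.Ici T, ENNReal.ofReal |t| ∂μ = ⊤) ∧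
    (∫⁻ t in Set.Iic T, ENNReal.ofReal |t| ∂μ = ⊤) := by
  have hg : Measurable (fun t : ℝ => ENNReal.ofReal |t|) :=
    measurable_id.abs.ennreal_ofReal
  have htot : ∫⁻ t, ENNReal.ofReal |t| ∂μ = ⊤ := by
    by_contra h
    apply hμ
    refine ⟨measurable_id.aestronglyMeasurable, ?_⟩
    rw [hasFiniteIntegral_iff_norm]
    simp only [Real.norm_eq_abs]
    exact lt_top_iff_ne_top.mpr h
  have hmap : Measure.map (fun t : ℝ => -t) μ = μ := by
    refine Measure.ext fun A hA => ?_
    rw [Measure.map_apply measurable_neg hA]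
    exact (hsym A hA).symm
  set S : ℝ := |T| with hS
  have hS0 : 0 ≤ S := abs_nonneg T
  have htails_eq : ∫⁻ t in Set.Iio (-S), ENNReal.ofReal |t| ∂μ
      = ∫⁻ t in Set.Ioi S, ENNReal.ofReal |t| ∂μ := by
    rw [← lintegral_indicator measurableSet_Iio, ← lintegral_indicator measurableSet_Ioi]
    conv_lhs => rw [← hmap]
    rw [lintegral_map (hg.indicator measurableSet_Iio) measurable_neg]
    refine lintegral_congr fun t => ?_
    by_cases h : S < t
    · rw [Set.indicator_of_mem (by simp [Set.mem_Iio]; linarith) ,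
        Set.indicator_of_mem (by simpa [Set.mem_Ioi] using h), abs_neg]
    · rw [Set.indicator_of_notMem (by simp [Set.mem_Iio]; linarith),
        Set.indicator_of_notMem (by simpa [Set.mem_Ioi] using h)]
  have hmid : ∫⁻ t in Set.Icc (-S) S, ENNReal.ofReal |t| ∂μ ≠ ⊤ := by
    have h1 : ∫⁻ t in Set.Icc (-S) S, ENNReal.ofReal |t| ∂μ
        ≤ ∫⁻ _ in Set.Icc (-S) S, ENNReal.ofReal S ∂μ := by
      refine setLIntegral_mono measurable_const fun t ht => ?_
      exact ENNReal.ofReal_le_ofReal (abs_le.mpr ⟨ht.1, ht.2⟩)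
    rw [setLIntegral_const] at h1
    exact ne_top_of_le_ne_top (ENNReal.mul_ne_top ENNReal.ofReal_ne_top
      (measure_ne_top μ _)) h1
  have huniv : (Set.Iio (-S) ∪ Set.Icc (-S) S ∪ Set.Ioi S) = Set.univ := by
    ext t
    simp only [Set.mem_union, Set.mem_Iio, Set.mem_Icc, Set.mem_Ioi, Set.mem_univ, iff_true]
    rcases lt_trichotomy t (-S) with h | h | h
    · exact Or.inl (Or.inl h)
    · exact Or.inl (Or.inr ⟨le_of_eq h.symm, by linarith⟩)
    · rcases le_or_gt t S with h2 | h2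
      · exact Or.inl (Or.inr ⟨h.le, h2⟩)
      · exact Or.inr h2
  have hle : (⊤ : ENNReal) ≤ ∫⁻ t in Set.Iio (-S), ENNReal.ofReal |t| ∂μ
      + ∫⁻ t in Set.Icc (-S) S, ENNReal.ofReal |t| ∂μ
      + ∫⁻ t in Set.Ioi S, ENNReal.ofReal |t| ∂μ := by
    rw [← htot, ← setLIntegral_univ, ← huniv]
    calc ∫⁻ t in Set.Iio (-S) ∪ Set.Icc (-S) S ∪ Set.Ioi S, ENNReal.ofReal |t| ∂μ
        ≤ ∫⁻ t in Set.Iio (-S) ∪ Set.Icc (-S) S, ENNReal.ofReal |t| ∂μ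
          + ∫⁻ t in Set.Ioi S, ENNReal.ofReal |t| ∂μ := lintegral_union_le _ _ _
      _ ≤ _ := by
          gcongr
          exact lintegral_union_le _ _ _
  have htailp : ∫⁻ t in Set.Ioi S, ENNReal.ofReal |t| ∂μ = ⊤ := by
    by_contra h
    rw [htails_eq] at hle
    have : (⊤:ENNReal) < ⊤ := lt_of_le_of_lt hle (by
      apply ENNReal.add_lt_top.mpr
      constructor
      · apply ENNReal.add_lt_top.mpr
        exact ⟨lt_top_iff_ne_top.mpr h, lt_top_iff_ne_top.mpr hmid⟩
      · exact lt_top_iff_ne_top.mpr h)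
    exact lt_irrefl _ this
  constructor
  · rw [← top_le_iff, ← htailp]
    apply lintegral_mono_set
    intro t ht
    have : S < t := ht
    have : T ≤ S := le_abs_self T
    simp only [Set.mem_Ici]
    linarith
  · have htailm : ∫⁻ t in Set.Iio (-S), ENNReal.ofReal |t| ∂μ = ⊤ := by
      rw [htails_eq]; exact htailp
    rw [← top_le_iff, ← htailm]
    apply lintegral_mono_set
    intro t ht
    have h1 : t < -S := ht
    have h2 : -S ≤ T := neg_abs_le T
    simp only [Set.mem_Iic]
    linarith

lemma final_contra (μ : Measure ℝ) [IsFiniteMeasure μ] (Z : ℕ → ℂ) {L B : ℝ}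
    (him : ∀ n, 0 < (Z n).im) (hyL : ∀ n, (Z n).im ≤ L)
    (hεsum : Summable (fun n => Pint μ (Z n)))
    (hB0 : 0 ≤ B) (hL0 : 0 < L)
    (S : Set ℝ) (hS : MeasurableSet S)
    (hScov : ∀ t ∈ S, ∃ n, (t - (Z n).re)^2 ≤ B^2)
    (htail : ∫⁻ t in S, ENNReal.ofReal |t| ∂μ = ⊤) : False := by
  have c₀pos : (0:ℝ) < B^2 + L^2 := by positivity
  have hΦlow : ∀ t ∈ S, ENNReal.ofReal ((1+t^2)/(B^2+L^2))
      ≤ ∑' n, ENNReal.ofReal (Pker (Z n) t) := by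
    intro t ht
    obtain ⟨n, hn⟩ := hScov t ht
    refine le_trans ?_ (ENNReal.le_tsum n)
    apply ENNReal.ofReal_le_ofReal
    unfold Pker
    rw [div_le_div_iff₀ c₀pos (normSq_tz_pos _ (him n).ne' t), normSq_tz]
    have h5 : (t - (Z n).re)^2 + (Z n).im^2 ≤ B^2 + L^2 := by
      nlinarith [mul_self_le_mul_self (him n).le (hyL n)]
    exact mul_le_mul_of_nonneg_left h5 (by positivity)
  have hmeas_n : ∀ n : ℕ, AEMeasurable (fun t => ENNReal.ofReal (Pker (Z n) t)) μ :=
    fun n => ((Pker_cont _ (him n).ne').measurable.ennreal_ofReal).aemeasurable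
  have hsum_fin : (∑' n, ∫⁻ t, ENNReal.ofReal (Pker (Z n) t) ∂μ) ≠ ⊤ := by
    have heq : ∀ n : ℕ, ∫⁻ t, ENNReal.ofReal (Pker (Z n) t) ∂μ
        = ENNReal.ofReal (Pint μ (Z n)) := by
      intro n
      rw [← ofReal_integral_eq_lintegral_ofReal (Pker_integrable μ _ (him n).ne')
        (Eventually.of_forall (Pker_nonneg _))]
      rfl
    calc (∑' n, ∫⁻ t, ENNReal.ofReal (Pker (Z n) t) ∂μ)
        = ∑' n, ENNReal.ofReal (Pint μ (Z n)) := tsum_congr heq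
      _ = ENNReal.ofReal (∑' n, Pint μ (Z n)) :=
          (ENNReal.ofReal_tsum_of_nonneg (fun n => Pint_nonneg μ (Z n)) hεsum).symm
      _ ≠ ⊤ := ENNReal.ofReal_ne_top
  have h1 : ∫⁻ t in S, ENNReal.ofReal |t| ∂μ
      ≤ ENNReal.ofReal (B^2+L^2) * ∑' n, ∫⁻ t, ENNReal.ofReal (Pker (Z n) t) ∂μ := by
    calc ∫⁻ t in S, ENNReal.ofReal |t| ∂μ
        ≤ ∫⁻ t in S, ENNReal.ofReal (B^2+L^2) * ENNReal.ofReal ((1+t^2)/(B^2+L^2)) ∂μ := by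
          refine setLIntegral_mono' hS fun t ht => ?_
          rw [← ENNReal.ofReal_mul c₀pos.le]
          apply ENNReal.ofReal_le_ofReal
          have he : (B^2+L^2) * ((1+t^2)/(B^2+L^2)) = 1+t^2 := by field_simp
          rw [he]
          nlinarith [sq_nonneg (|t| - 1), _root_.sq_abs t, abs_nonneg t]
      _ ≤ ∫⁻ t in S, ENNReal.ofReal (B^2+L^2) * (∑' n, ENNReal.ofReal (Pker (Z n) t)) ∂μ :=
          setLIntegral_mono' hS fun t ht => mul_le_mul_right (hΦlow t ht) _
      _ ≤ ∫⁻ t, ENNReal.ofReal (B^2+L^2) * (∑' n, ENNReal.ofReal (Pker (Z n) t)) ∂μ :=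
          setLIntegral_le_lintegral _ _
      _ = ENNReal.ofReal (B^2+L^2) * ∫⁻ t, (∑' n, ENNReal.ofReal (Pker (Z n) t)) ∂μ :=
          lintegral_const_mul' _ _ ENNReal.ofReal_ne_top
      _ = ENNReal.ofReal (B^2+L^2) * ∑' n, ∫⁻ t, ENNReal.ofReal (Pker (Z n) t) ∂μ := by
          rw [lintegral_tsum hmeas_n]
  rw [htail, top_le_iff] at h1
  exact ENNReal.mul_ne_top ENNReal.ofReal_ne_top hsum_fin h1

theorem stmt_11 (β : ℝ) (μ : Measure ℝ) [IsFiniteMeasure μ]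
    (hsym : ∀ A : Set ℝ, MeasurableSet A → μ A = μ ((fun t : ℝ => -t) ⁻¹' A))
    (hμ : ¬ Integrable (fun t : ℝ => t) μ) (hβ : β ≠ 0) :
    ∀ z₀ : ℂ, 0 < z₀.im →
      Tendsto (fun n : ℕ => ((fmap β μ)^[n] z₀).im) atTop atTop := by
  intro z₀ hz₀
  have hμ0 : μ ≠ 0 := by
    intro h
    apply hμ
    rw [h]
    exact integrable_zero_measure
  have hm : 0 < (μ Set.univ).toReal :=
    ENNReal.toReal_pos (Measure.measure_univ_ne_zero.mpr hμ0) (measure_ne_top μ _)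
  set Z : ℕ → ℂ := fun n => (fmap β μ)^[n] z₀ with hZ
  have hZsucc : ∀ n, Z (n+1) = fmap β μ (Z n) := fun n =>
    Function.iterate_succ_apply' (fmap β μ) n z₀
  have him : ∀ n, 0 < (Z n).im := by
    intro n
    induction n with
    | zero => simpa [hZ] using hz₀
    | succ n ih => rw [hZsucc]; exact fmap_im_pos β μ _ ih
  have hy : ∀ n, (Z (n+1)).im = (Z n).im * (1 + Pint μ (Z n)) := fun n => by
    rw [hZsucc n]
    exact fmap_im β μ (Z n) (him n).ne'
  have hymono : Monotone (fun n => (Z n).im) := monotone_nat_of_le_succ fun n => by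
    rw [hy n]
    nlinarith [him n, Pint_nonneg μ (Z n)]
  rcases tendsto_of_monotone hymono with ht | ⟨L, hL⟩
  · exact ht
  exfalso
  have hyL : ∀ n, (Z n).im ≤ L := fun n => hymono.ge_of_tendsto hL n
  have hy0 : 0 < (Z 0).im := him 0
  have hL0 : 0 < L := lt_of_lt_of_le hy0 (hyL 0)
  -- ε is summable
  have hd_nn : ∀ n, 0 ≤ (Z (n+1)).im - (Z n).im := fun n => by
    have := hymono (Nat.le_succ n); simp at this ⊢; linarith
  have hdsum : Summable (fun n => (Z (n+1)).im - (Z n).im) := by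
    apply summable_of_sum_range_le hd_nn
    intro n
    rw [Finset.sum_range_sub (f := fun n => (Z n).im)]
    have := hyL n
    linarith
  have hεle : ∀ n, Pint μ (Z n) ≤ ((Z (n+1)).im - (Z n).im) / (Z 0).im := by
    intro n
    rw [hy n, le_div_iff₀ hy0]
    have h1 : (Z 0).im ≤ (Z n).im := hymono (Nat.zero_le n)
    nlinarith [Pint_nonneg μ (Z n)]
  have hεsum : Summable (fun n => Pint μ (Z n)) :=
    Summable.of_nonneg_of_le (fun n => Pint_nonneg μ (Z n)) hεle (hdsum.div_const _)
  have hε0 : Tendsto (fun n => Pint μ (Z n)) atTop (𝓝 0) := hεsum.tendsto_atTop_zero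
  -- lower bound on ε when the real part stays bounded
  have hPlow : ∀ (n : ℕ) (C : ℝ), 0 ≤ C → |(Z n).re| ≤ C →
      (μ Set.univ).toReal / (2 + 2*C^2 + L^2) ≤ Pint μ (Z n) := by
    intro n C hC hxC
    have hple : ∀ t : ℝ, 1 / (2 + 2*C^2 + L^2) ≤ Pker (Z n) t := by
      intro t
      unfold Pker
      rw [div_le_div_iff₀ (by positivity) (normSq_tz_pos _ (him n).ne' t), normSq_tz]
      have h1 : (Z n).im ≤ L := hyL n
      have h2 : 0 < (Z n).im := him n
      nlinarith [sq_nonneg (t + (Z n).re), mul_self_le_mul_self (abs_nonneg ((Z n).re)) hxC,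
        mul_self_le_mul_self h2.le h1, sq_nonneg t, _root_.sq_abs ((Z n).re)]
    calc (μ Set.univ).toReal / (2 + 2*C^2 + L^2)
        = ∫ _ : ℝ, 1/(2+2*C^2+L^2) ∂μ := by
          rw [integral_const]; simp [smul_eq_mul, Measure.real]; ring
      _ ≤ ∫ t, Pker (Z n) t ∂μ :=
          integral_mono (integrable_const _) (Pker_integrable μ _ (him n).ne') hple
      _ = Pint μ (Z n) := rfl
  -- the real parts eventually exceed any bound in absolute value
  have hxinf : ∀ C : ℝ, 0 ≤ C → ∀ᶠ n in atTop, C < |(Z n).re| := by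
    intro C hC
    have hδ : 0 < (μ Set.univ).toReal / (2 + 2*C^2 + L^2) := by positivity
    filter_upwards [hε0.eventually_lt_const hδ] with n hn
    by_contra h
    push_neg at h
    exact absurd (hPlow n C hC h) (not_le.mpr hn)
  -- pseudo-hyperbolic contraction along the orbit
  have hρ : ∀ n, pseudoHyp (Z (n+1)) (Z n) ≤ pseudoHyp (Z 1) (Z 0) := by
    intro n
    induction n with
    | zero => exact le_refl _
    | succ n ih =>
        have h3 := contraction β μ (Z (n+1)) (Z n) (him (n+1)) (him n)
        rw [← hZsucc (n+1), ← hZsucc n] at h3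
        exact h3.trans ih
  have hr1 : pseudoHyp (Z 1) (Z 0) < 1 := pseudoHyp_lt_one _ _ (him 1) (him 0)
  have hrnn : 0 ≤ pseudoHyp (Z 1) (Z 0) :=
    div_nonneg (norm_nonneg _) (norm_nonneg _)
  set r : ℝ := pseudoHyp (Z 1) (Z 0) with hrdef
  set B : ℝ := 2 * r * L / (1 - r) with hBdef
  have hB0 : 0 ≤ B := div_nonneg (by positivity) (by linarith)
  have hinc : ∀ n, ‖Z (n+1) - Z n‖ ≤ B := by
    intro n
    have himd : 0 < (Z (n+1) - (starRingEnd ℂ) (Z n)).im := by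
      rw [Complex.sub_im, Complex.conj_im]
      have := him n; have := him (n+1)
      linarith
    have hd : 0 < ‖Z (n+1) - (starRingEnd ℂ) (Z n)‖ := by
      apply norm_pos_iff.mpr
      intro h0
      rw [h0] at himd
      simp at himd
    have h1 := abs_sub_le_of_pseudoHyp (Z (n+1)) (Z n) (him n) hr1 (hρ n) hd
    refine h1.trans ?_
    rw [hBdef, div_le_div_iff₀ (by linarith) (by linarith)]
    nlinarith [mul_nonneg (mul_nonneg hrnn (by linarith : (0:ℝ) ≤ 1 - r))
      (by linarith [hyL n] : (0:ℝ) ≤ L - (Z n).im)]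
  have hxinc : ∀ n, |(Z (n+1)).re - (Z n).re| ≤ B := fun n => by
    have h1 := Complex.abs_re_le_norm (Z (n+1) - Z n)
    rw [Complex.sub_re] at h1
    exact h1.trans (hinc n)
  obtain ⟨N₁, hN₁⟩ := eventually_atTop.mp (hxinf B hB0)
  rcases le_or_gt ((Z N₁).re) 0 with hsgn | hsgn
  · -- the real parts eventually go to -∞
    have hneg : ∀ n, N₁ ≤ n → (Z n).re < -B := by
      intro n hn
      induction n, hn using Nat.le_induction with
      | base =>
          have h1 := hN₁ N₁ le_rfl
          rw [_root_.abs_of_nonpos hsgn] at h1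
          linarith
      | succ n hn ih =>
          have h1 := abs_le.mp (hxinc n)
          have h3 : (Z (n+1)).re ≤ 0 := by linarith [h1.2, ih]
          have h4 := hN₁ (n+1) (by omega)
          rw [_root_.abs_of_nonpos h3] at h4
          linarith
    have hcov : ∀ t : ℝ, t ≤ (Z N₁).re → ∃ n, t ≤ (Z n).re ∧ (Z n).re - t ≤ B := by
      intro t ht
      have hex : ∃ k : ℕ, (Z (N₁ + k)).re < t := by
        obtain ⟨N₂, hN₂⟩ := eventually_atTop.mp (hxinf (|t|+1) (by positivity))
        refine ⟨N₂, ?_⟩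
        have h1 := hN₂ (N₁ + N₂) (by omega)
        have h2 := hneg (N₁ + N₂) (by omega)
        have hxs : (Z (N₁ + N₂)).re ≤ 0 := by linarith
        rw [_root_.abs_of_nonpos hxs] at h1
        have := neg_abs_le t
        linarith
      have hk₀ := Nat.find_spec hex
      have hk0ne : Nat.find hex ≠ 0 := by
        intro h0
        rw [h0] at hk₀
        simp only [Nat.add_zero] at hk₀
        linarith
      refine ⟨N₁ + (Nat.find hex - 1), ?_, ?_⟩
      · have h1 := Nat.find_min hex (m := Nat.find hex - 1) (by omega)
        push_neg at h1
        exact h1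
      · have h2 : (Z (N₁ + (Nat.find hex - 1) + 1)).re < t := by
          have he : N₁ + (Nat.find hex - 1) + 1 = N₁ + Nat.find hex := by omega
          rw [he]
          exact hk₀
        have h3 := abs_le.mp (hxinc (N₁ + (Nat.find hex - 1)))
        linarith [h3.1]
    refine final_contra μ Z him hyL hεsum hB0 hL0 (Set.Iic ((Z N₁).re)) measurableSet_Iic
      (fun t ht => ?_) (tails_top μ hsym hμ ((Z N₁).re)).2
    obtain ⟨n, h1, h2⟩ := hcov t ht
    exact ⟨n, sq_le_sq' (by linarith) (by linarith)⟩
  · -- the real parts eventually go to +∞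
    have hpos : ∀ n, N₁ ≤ n → B < (Z n).re := by
      intro n hn
      induction n, hn using Nat.le_induction with
      | base =>
          have h1 := hN₁ N₁ le_rfl
          rw [_root_.abs_of_pos hsgn] at h1
          linarith
      | succ n hn ih =>
          have h1 := abs_le.mp (hxinc n)
          have h3 : 0 ≤ (Z (n+1)).re := by linarith [h1.1, ih]
          have h4 := hN₁ (n+1) (by omega)
          rw [_root_.abs_of_nonneg h3] at h4
          linarith
    have hcov : ∀ t : ℝ, (Z N₁).re ≤ t → ∃ n, (Z n).re ≤ t ∧ t - (Z n).re ≤ B := by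
      intro t ht
      have hex : ∃ k : ℕ, t < (Z (N₁ + k)).re := by
        obtain ⟨N₂, hN₂⟩ := eventually_atTop.mp (hxinf (|t|+1) (by positivity))
        refine ⟨N₂, ?_⟩
        have h1 := hN₂ (N₁ + N₂) (by omega)
        have h2 := hpos (N₁ + N₂) (by omega)
        have hxs : 0 ≤ (Z (N₁ + N₂)).re := by linarith
        rw [_root_.abs_of_nonneg hxs] at h1
        have := le_abs_self t
        linarith
      have hk₀ := Nat.find_spec hex
      have hk0ne : Nat.find hex ≠ 0 := by
        intro h0
        rw [h0] at hk₀
        simp only [Nat.add_zero] at hk₀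
        linarith
      refine ⟨N₁ + (Nat.find hex - 1), ?_, ?_⟩
      · have h1 := Nat.find_min hex (m := Nat.find hex - 1) (by omega)
        push_neg at h1
        exact h1
      · have h2 : t < (Z (N₁ + (Nat.find hex - 1) + 1)).re := by
          have he : N₁ + (Nat.find hex - 1) + 1 = N₁ + Nat.find hex := by omega
          rw [he]
          exact hk₀
        have h3 := abs_le.mp (hxinc (N₁ + (Nat.find hex - 1)))
        linarith [h3.2]
    refine final_contra μ Z him hyL hεsum hB0 hL0 (Set.Ici ((Z N₁).re)) measurableSet_Ici
      (fun t ht => ?_) (tails_top μ hsym hμ ((Z N₁).re)).1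
    obtain ⟨n, h1, h2⟩ := hcov t ht
    exact ⟨n, sq_le_sq' (by linarith) (by linarith)⟩
end

section
/- Let f(z) = z + β + ∫_ℝ (1+tz)/(t−z) dμ(t) on the upper half-plane H, where μ is a symmetric finite positive Borel measure with ∫_ℝ |t| dμ(t) = ∞ and β ≠ 0. Then for every z₀ ∈ H and every n ≥ 1, writing C = |β| + μ({0})/y₀, one has |x_n| ≤ C·(1 + y_n·Σ_{j=1}^{n−1} 1/y_j) + (y_n/y₀)·|x₀|, where z_k = f^k(z₀), x_k = Re z_k, y_k = Im z_k. -/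
open MeasureTheory Filter Complex Topology

namespace S12

lemma denom_ne (z : ℂ) (hz : 0 < z.im) (t : ℝ) : (t : ℂ) - z ≠ 0 := by
  intro h
  have h2 : ((t:ℂ) - z).im = 0 := by rw [h]; simp
  simp [Complex.sub_im] at h2
  linarith

lemma norm_denom_ge (z : ℂ) (hz : 0 < z.im) (t : ℝ) : z.im ≤ ‖(t:ℂ) - z‖ := by
  have h1 : |((t:ℂ) - z).im| ≤ ‖(t:ℂ) - z‖ := Complex.abs_im_le_norm _
  have h2 : ((t:ℂ) - z).im = -z.im := by simp [Complex.sub_im]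
  rw [h2, abs_neg, abs_of_pos hz] at h1
  exact h1

lemma g_cont (z : ℂ) (hz : 0 < z.im) :
    Continuous (fun t : ℝ => (1 + (t:ℂ)*z)/((t:ℂ)-z)) := by
  apply Continuous.div
  · fun_prop
  · fun_prop
  · exact fun t => denom_ne z hz t

lemma g_integrable (μ : Measure ℝ) [IsFiniteMeasure μ] (z : ℂ) (hz : 0 < z.im) :
    Integrable (fun t : ℝ => (1 + (t:ℂ)*z)/((t:ℂ)-z)) μ := by
  refine Integrable.mono' (g := fun _ => ‖z‖ + ‖1+z^2‖/z.im)
    (integrable_const _) ((g_cont z hz).aestronglyMeasurable) (ae_of_all _ fun t => ?_)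
  have hne := denom_ne z hz t
  have heq : (1 + (t:ℂ)*z)/((t:ℂ)-z) = z + (1+z^2)/((t:ℂ)-z) := by
    field_simp
    ring
  rw [heq]
  calc ‖z + (1+z^2)/((t:ℂ)-z)‖ ≤ ‖z‖ + ‖(1+z^2)/((t:ℂ)-z)‖ := norm_add_le _ _
    _ ≤ ‖z‖ + ‖1+z^2‖/z.im := by
        refine add_le_add le_rfl ?_
        rw [norm_div]
        exact div_le_div_of_nonneg_left (by positivity) hz (norm_denom_ge z hz t)

lemma g_re (z : ℂ) (t : ℝ) :
    ((1 + (t:ℂ)*z)/((t:ℂ)-z)).re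
      = ((1+t*z.re)*(t-z.re) - t*z.im^2)/((t-z.re)^2+z.im^2) := by
  rw [Complex.div_re]
  simp [Complex.normSq_apply]
  ring

lemma g_im (z : ℂ) (t : ℝ) :
    ((1 + (t:ℂ)*z)/((t:ℂ)-z)).im = z.im*(1+t^2)/((t-z.re)^2+z.im^2) := by
  rw [Complex.div_im]
  simp [Complex.normSq_apply]
  ring

lemma key (t x y : ℝ) (hy : 0 < y) :
    |((1+t*x)*(t-x) - t*y^2)/((t-x)^2+y^2)
      + ((1+(-t)*x)*((-t)-x) - (-t)*y^2)/(((-t)-x)^2+y^2)|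
    ≤ (|x|/y) * (y*(1+t^2)/((t-x)^2+y^2) + y*(1+(-t)^2)/(((-t)-x)^2+y^2)) := by
  have hD1 : (0:ℝ) < (t-x)^2+y^2 := by positivity
  have hD2 : (0:ℝ) < ((-t)-x)^2+y^2 := by positivity
  set a : ℝ := |x| with ha
  have ha0 : 0 ≤ a := abs_nonneg x
  have hsum : ((1+t*x)*(t-x) - t*y^2)/((t-x)^2+y^2)
      + ((1+(-t)*x)*((-t)-x) - (-t)*y^2)/(((-t)-x)^2+y^2)
      = (2*x*(1+t^2)*(t^2-x^2-y^2))/(((t-x)^2+y^2)*(((-t)-x)^2+y^2)) := by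
    field_simp
    ring
  have hrhs : (a/y) * (y*(1+t^2)/((t-x)^2+y^2) + y*(1+(-t)^2)/(((-t)-x)^2+y^2))
      = (a*(1+t^2)*(((t-x)^2+y^2)+(((-t)-x)^2+y^2)))/(((t-x)^2+y^2)*(((-t)-x)^2+y^2)) := by
    field_simp
    ring
  rw [hsum, hrhs, abs_div, abs_of_pos (mul_pos hD1 hD2),
    div_le_div_iff_of_pos_right (mul_pos hD1 hD2)]
  have h2 : |t^2-x^2-y^2| ≤ t^2+x^2+y^2 := by
    rw [abs_le]; constructor <;> nlinarith
  have h1 : |2*x*(1+t^2)*(t^2-x^2-y^2)| = 2*a*(1+t^2)*|t^2-x^2-y^2| := by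
    rw [abs_mul, abs_mul, abs_mul, ha,
      abs_of_pos (by positivity : (0:ℝ) < 1+t^2), abs_of_pos (by norm_num : (0:ℝ) < 2)]
  rw [h1]
  nlinarith [mul_le_mul_of_nonneg_left h2 (by positivity : (0:ℝ) ≤ 2*a*(1+t^2))]

lemma map_neg_eq (μ : Measure ℝ)
    (hsym : ∀ A : Set ℝ, MeasurableSet A → μ A = μ ((fun t : ℝ => -t) ⁻¹' A)) :
    μ.map (fun t : ℝ => -t) = μ := by
  refine Measure.ext fun A hA => ?_
  rw [Measure.map_apply measurable_neg hA]
  exact (hsym A hA).symm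

lemma fmap_re_eq (β : ℝ) (μ : Measure ℝ) [IsFiniteMeasure μ] (z : ℂ) (hz : 0 < z.im) :
    (fmap β μ z).re = z.re + β + ∫ t, ((1 + (t:ℂ)*z)/((t:ℂ)-z)).re ∂μ := by
  have h := integral_re (𝕜 := ℂ) (g_integrable μ z hz)
  simp only [RCLike.re_to_complex] at h
  simp [fmap, Complex.add_re, ← h]

lemma fmap_im_eq (β : ℝ) (μ : Measure ℝ) [IsFiniteMeasure μ] (z : ℂ) (hz : 0 < z.im) :
    (fmap β μ z).im = z.im + ∫ t, ((1 + (t:ℂ)*z)/((t:ℂ)-z)).im ∂μ := by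
  have h := integral_im (𝕜 := ℂ) (g_integrable μ z hz)
  simp only [RCLike.im_to_complex] at h
  simp [fmap, Complex.add_im, ← h]

lemma integral_gim_nonneg (μ : Measure ℝ) (z : ℂ) (hz : 0 < z.im) :
    0 ≤ ∫ t, ((1 + (t:ℂ)*z)/((t:ℂ)-z)).im ∂μ := by
  refine integral_nonneg fun t => ?_
  rw [g_im]
  have h1 : (0:ℝ) < (t - z.re)^2 + z.im^2 := by positivity
  have h2 : (0:ℝ) ≤ z.im * (1 + t^2) := by positivity
  exact div_nonneg h2 h1.le

lemma im_ge (β : ℝ) (μ : Measure ℝ) [IsFiniteMeasure μ] (z : ℂ) (hz : 0 < z.im) :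
    z.im ≤ (fmap β μ z).im := by
  rw [fmap_im_eq β μ z hz]
  linarith [integral_gim_nonneg μ z hz]

lemma step (β : ℝ) (μ : Measure ℝ) [IsFiniteMeasure μ]
    (hsym : ∀ A : Set ℝ, MeasurableSet A → μ A = μ ((fun t : ℝ => -t) ⁻¹' A))
    (z : ℂ) (hz : 0 < z.im) :
    |(fmap β μ z).re| ≤ |β| + (|z.re|/z.im) * (fmap β μ z).im := by
  set g : ℝ → ℂ := fun t => (1 + (t:ℂ)*z)/((t:ℂ)-z) with hg
  have hi : Integrable g μ := g_integrable μ z hz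
  have hmp : MeasurePreserving (fun t:ℝ => -t) μ μ := ⟨measurable_neg, map_neg_eq μ hsym⟩
  have hemb : MeasurableEmbedding (fun t:ℝ => -t) := (Homeomorph.neg ℝ).measurableEmbedding
  have hin : Integrable (fun t => g (-t)) μ := (hmp.integrable_comp_emb hemb).mpr hi
  have hire : Integrable (fun t => (g t).re) μ := by simpa using hi.re
  have hiim : Integrable (fun t => (g t).im) μ := by simpa using hi.im
  have hinre : Integrable (fun t => (g (-t)).re) μ := by simpa using hin.re
  have hinim : Integrable (fun t => (g (-t)).im) μ := by simpa using hin.im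
  have him0 : 0 ≤ ∫ t, (g t).im ∂μ := integral_gim_nonneg μ z hz
  -- symmetrization of the real part
  have h1 : ∫ t, (g (-t)).re ∂μ = ∫ t, (g t).re ∂μ :=
    hmp.integral_comp hemb (fun t => (g t).re)
  have h2 : ∫ t, (g (-t)).im ∂μ = ∫ t, (g t).im ∂μ :=
    hmp.integral_comp hemb (fun t => (g t).im)
  have hsre : ∫ t, (g t).re ∂μ = ∫ t, ((g t).re + (g (-t)).re)/2 ∂μ := by
    rw [integral_div, integral_add hire hinre, h1]
    ring
  have hsim : ∫ t, (g t).im ∂μ = ∫ t, ((g t).im + (g (-t)).im)/2 ∂μ := by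
    rw [integral_div, integral_add hiim hinim, h2]
    ring
  have hpt : ∀ t : ℝ, |((g t).re + (g (-t)).re)/2|
      ≤ (|z.re|/z.im) * (((g t).im + (g (-t)).im)/2) := by
    intro t
    have hk := key t z.re z.im hz
    simp only [hg, g_re, g_im]
    rw [abs_div, abs_of_pos (by norm_num : (0:ℝ) < 2)]
    linarith [hk]
  have hb : |∫ t, (g t).re ∂μ| ≤ (|z.re|/z.im) * ∫ t, (g t).im ∂μ := by
    rw [hsre, hsim]
    calc |∫ t, ((g t).re + (g (-t)).re)/2 ∂μ|
        ≤ ∫ t, |((g t).re + (g (-t)).re)/2| ∂μ := by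
          simpa only [Real.norm_eq_abs] using
            norm_integral_le_integral_norm (fun t => ((g t).re + (g (-t)).re)/2) (μ := μ)
      _ ≤ ∫ t, (|z.re|/z.im) * (((g t).im + (g (-t)).im)/2) ∂μ := by
          refine integral_mono ((hire.add hinre).div_const 2).abs ?_ hpt
          exact (((hiim.add hinim).div_const 2).const_mul _)
      _ = (|z.re|/z.im) * ∫ t, ((g t).im + (g (-t)).im)/2 ∂μ := integral_const_mul _ _
  have hre := fmap_re_eq β μ z hz
  have him := fmap_im_eq β μ z hz
  have hx : (|z.re|/z.im) * z.im = |z.re| := div_mul_cancel₀ _ hz.ne'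
  have habs : |(fmap β μ z).re| ≤ |z.re| + |β| + |∫ t, (g t).re ∂μ| := by
    rw [hre]
    calc |z.re + β + ∫ t, (g t).re ∂μ| ≤ |z.re + β| + |∫ t, (g t).re ∂μ| := abs_add_le _ _
      _ ≤ |z.re| + |β| + |∫ t, (g t).re ∂μ| := by linarith [abs_add_le z.re β]
  rw [him] at *
  nlinarith [abs_nonneg z.re, div_nonneg (abs_nonneg z.re) hz.le]

end S12

theorem stmt_12 (β : ℝ) (μ : Measure ℝ) [IsFiniteMeasure μ]
    (hsym : ∀ A : Set ℝ, MeasurableSet A → μ A = μ ((fun t : ℝ => -t) ⁻¹' A))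
    (hμ : ¬ Integrable (fun t : ℝ => t) μ) (hβ : β ≠ 0)
    (z₀ : ℂ) (hz₀ : 0 < z₀.im) (n : ℕ) (hn : 1 ≤ n) :
    |((fmap β μ)^[n] z₀).re| ≤
      (|β| + (μ {0}).toReal / z₀.im) *
        (1 + ((fmap β μ)^[n] z₀).im *
          ∑ j ∈ Finset.Icc 1 (n - 1), 1 / ((fmap β μ)^[j] z₀).im) +
      (((fmap β μ)^[n] z₀).im / z₀.im) * |z₀.re| := by
  have hpos : ∀ k : ℕ, 0 < ((fmap β μ)^[k] z₀).im := by
    intro k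
    induction k with
    | zero => simpa using hz₀
    | succ k ih =>
      rw [Function.iterate_succ_apply']
      exact lt_of_lt_of_le ih (S12.im_ge β μ _ ih)
  have claim : ∀ m : ℕ, |((fmap β μ)^[m] z₀).re| / ((fmap β μ)^[m] z₀).im
      ≤ |z₀.re| / z₀.im + |β| * ∑ j ∈ Finset.Icc 1 m, 1 / ((fmap β μ)^[j] z₀).im := by
    intro m
    induction m with
    | zero => simp
    | succ m ih =>
      have hym := hpos m
      have hym1 := hpos (m+1)
      have hstep := S12.step β μ hsym ((fmap β μ)^[m] z₀) hym
      rw [show fmap β μ ((fmap β μ)^[m] z₀) = (fmap β μ)^[m+1] z₀ from (Function.iterate_succ_apply' _ _ _).symm] at hstep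
      have hdiv : |((fmap β μ)^[m+1] z₀).re| / ((fmap β μ)^[m+1] z₀).im
          ≤ |β| / ((fmap β μ)^[m+1] z₀).im
            + |((fmap β μ)^[m] z₀).re| / ((fmap β μ)^[m] z₀).im := by
        have heq : (|β| / ((fmap β μ)^[m+1] z₀).im
              + |((fmap β μ)^[m] z₀).re| / ((fmap β μ)^[m] z₀).im) * ((fmap β μ)^[m+1] z₀).im
            = |β| + |((fmap β μ)^[m] z₀).re| / ((fmap β μ)^[m] z₀).im
                * ((fmap β μ)^[m+1] z₀).im := by
          rw [add_mul, div_mul_cancel₀ _ (ne_of_gt hym1)]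
        rw [div_le_iff₀ hym1, heq]
        exact hstep
      have hsum : ∑ j ∈ Finset.Icc 1 (m+1), 1 / ((fmap β μ)^[j] z₀).im
          = (∑ j ∈ Finset.Icc 1 m, 1 / ((fmap β μ)^[j] z₀).im)
            + 1 / ((fmap β μ)^[m+1] z₀).im :=
        Finset.sum_Icc_succ_top (by omega) _
      have hb1 : |β| * (1 / ((fmap β μ)^[m+1] z₀).im) = |β| / ((fmap β μ)^[m+1] z₀).im := by
        ring
      rw [hsum]
      nlinarith [hdiv, ih]
  obtain ⟨m, rfl⟩ : ∃ m, n = m + 1 := ⟨n - 1, (Nat.succ_pred_eq_of_pos hn).symm⟩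
  have hm : m + 1 - 1 = m := rfl
  rw [hm]
  have hym := hpos m
  have hym1 := hpos (m+1)
  have hstep := S12.step β μ hsym ((fmap β μ)^[m] z₀) hym
  rw [show fmap β μ ((fmap β μ)^[m] z₀) = (fmap β μ)^[m+1] z₀ from (Function.iterate_succ_apply' _ _ _).symm] at hstep
  have hc := claim m
  set S := ∑ j ∈ Finset.Icc 1 m, 1 / ((fmap β μ)^[j] z₀).im with hS
  have hS0 : 0 ≤ S := Finset.sum_nonneg fun j _ => one_div_nonneg.mpr (hpos j).le
  have hc0 : 0 ≤ (μ {0}).toReal / z₀.im := div_nonneg ENNReal.toReal_nonneg hz₀.le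
  have hq : (((fmap β μ)^[m+1] z₀).im / z₀.im) * |z₀.re|
      = ((fmap β μ)^[m+1] z₀).im * (|z₀.re| / z₀.im) := by ring
  rw [hq]
  nlinarith [mul_le_mul_of_nonneg_right hc hym1.le,
    mul_nonneg hc0 (mul_nonneg hym1.le hS0), hc0, abs_nonneg β,
    mul_nonneg (abs_nonneg β) (mul_nonneg hym1.le hS0)]
end

section
/- Let f(z) = z + β + ∫_ℝ (1+tz)/(t−z) dμ(t) on the upper half-plane H, where μ is a symmetric finite positive Borel measure with ∫_ℝ |t| dμ(t) = ∞ and β ≠ 0. Then for every z₀ ∈ H, |x_n|/(n·y_n) → 0 as n → ∞, where z_n = f^n(z₀), x_n = Re z_n, y_n = Im z_n. -/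
open MeasureTheory Filter Complex Topology

open scoped ENNReal NNReal

set_option maxHeartbeats 1000000
set_option linter.unusedSectionVars false

namespace Stmt13Aux

noncomputable def Ifun (μ : Measure ℝ) (z : ℂ) : ℝ :=
  ∫ t : ℝ, (1 + t^2) / ((t - z.re)^2 + z.im^2) ∂μ

variable {μ : Measure ℝ} [IsFiniteMeasure μ] {z : ℂ} {β : ℝ}

lemma A_pos (hz : z.im ≠ 0) (t : ℝ) : 0 < (t - z.re)^2 + z.im^2 := by positivity

lemma sub_ne (hz : z.im ≠ 0) (t : ℝ) : (t : ℂ) - z ≠ 0 := by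
  intro h
  have := congrArg Complex.im h
  simp at this
  exact hz this

lemma integrable_inv (hz : z.im ≠ 0) : Integrable (fun t : ℝ => ((t:ℂ) - z)⁻¹) μ := by
  have hcont : Continuous fun t : ℝ => ((t:ℂ) - z)⁻¹ :=
    (Complex.continuous_ofReal.sub continuous_const).inv₀ (sub_ne hz)
  refine (integrable_const (|z.im|⁻¹)).mono' hcont.aestronglyMeasurable ?_
  filter_upwards with t
  rw [norm_inv]
  have h1 : |z.im| ≤ ‖(t:ℂ) - z‖ := by
    have := Complex.abs_im_le_norm ((t:ℂ) - z)
    simpa using this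
  have h2 : (0:ℝ) < |z.im| := abs_pos.mpr hz
  exact inv_anti₀ h2 h1

lemma integrand_eq (hz : z.im ≠ 0) (t : ℝ) :
    (1 + (t:ℂ) * z) / ((t:ℂ) - z) = z + (1 + z^2) * ((t:ℂ) - z)⁻¹ := by
  field_simp [sub_ne hz t]
  ring

lemma integrable_main (hz : z.im ≠ 0) :
    Integrable (fun t : ℝ => (1 + (t:ℂ) * z) / ((t:ℂ) - z)) μ := by
  have : Integrable (fun t : ℝ => z + (1 + z^2) * ((t:ℂ) - z)⁻¹) μ :=
    (integrable_const z).add ((integrable_inv hz).const_mul _)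
  exact this.congr (by filter_upwards with t; exact (integrand_eq hz t).symm)

lemma im_integrand (hz : z.im ≠ 0) (t : ℝ) :
    ((1 + (t:ℂ) * z) / ((t:ℂ) - z)).im
      = z.im * ((1 + t^2) / ((t - z.re)^2 + z.im^2)) := by
  have hA : ((t - z.re)^2 + z.im^2) ≠ 0 := (A_pos hz t).ne'
  rw [Complex.div_im]
  have hns : Complex.normSq ((t:ℂ) - z) = (t - z.re)^2 + z.im^2 := by
    rw [Complex.normSq_apply]; simp; ring
  rw [hns]
  simp [Complex.add_im, Complex.mul_im, Complex.add_re, Complex.mul_re]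
  field_simp
  ring

lemma re_integrand (hz : z.im ≠ 0) (t : ℝ) :
    ((1 + (t:ℂ) * z) / ((t:ℂ) - z)).re
      = (t * (1 - (z.re^2 + z.im^2)) + z.re * (t^2 - 1)) / ((t - z.re)^2 + z.im^2) := by
  have hA : ((t - z.re)^2 + z.im^2) ≠ 0 := (A_pos hz t).ne'
  rw [Complex.div_re]
  have hns : Complex.normSq ((t:ℂ) - z) = (t - z.re)^2 + z.im^2 := by
    rw [Complex.normSq_apply]; simp; ring
  rw [hns]
  simp [Complex.add_im, Complex.mul_im, Complex.add_re, Complex.mul_re]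
  field_simp
  ring

lemma integrable_I (hz : z.im ≠ 0) :
    Integrable (fun t : ℝ => (1 + t^2) / ((t - z.re)^2 + z.im^2)) μ := by
  have h1 : Integrable (fun t : ℝ => ((1 + (t:ℂ) * z) / ((t:ℂ) - z)).im) μ :=
    (integrable_main hz).im
  have h2 : Integrable (fun t : ℝ => z.im * ((1 + t^2) / ((t - z.re)^2 + z.im^2))) μ :=
    h1.congr (by filter_upwards with t; exact (im_integrand hz t))
  have := h2.const_mul (z.im)⁻¹
  refine this.congr ?_
  filter_upwards with t
  field_simp

lemma Ifun_nonneg (hz : z.im ≠ 0) : 0 ≤ Ifun μ z := by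
  refine integral_nonneg fun t => ?_
  have := A_pos hz t
  positivity

lemma im_fmap (hz : z.im ≠ 0) : (fmap β μ z).im = z.im * (1 + Ifun μ z) := by
  have hint := integrable_main (μ := μ) hz
  have : (∫ t : ℝ, (1 + (t:ℂ) * z) / ((t:ℂ) - z) ∂μ).im
      = ∫ t : ℝ, ((1 + (t:ℂ) * z) / ((t:ℂ) - z)).im ∂μ := by
    simpa using (integral_im hint).symm
  rw [fmap, Complex.add_im, Complex.add_im, this]
  have : ∫ t : ℝ, ((1 + (t:ℂ) * z) / ((t:ℂ) - z)).im ∂μ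
      = z.im * Ifun μ z := by
    rw [Ifun, ← integral_const_mul]
    exact integral_congr_ae (by filter_upwards with t; exact im_integrand hz t)
  rw [this]
  simp
  ring

lemma re_fmap (hz : z.im ≠ 0) :
    (fmap β μ z).re = z.re + β + ∫ t : ℝ,
      (t * (1 - (z.re^2 + z.im^2)) + z.re * (t^2 - 1)) / ((t - z.re)^2 + z.im^2) ∂μ := by
  have hint := integrable_main (μ := μ) hz
  have h1 : (∫ t : ℝ, (1 + (t:ℂ) * z) / ((t:ℂ) - z) ∂μ).re
      = ∫ t : ℝ, ((1 + (t:ℂ) * z) / ((t:ℂ) - z)).re ∂μ := by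
    simpa using (integral_re hint).symm
  rw [fmap, Complex.add_re, Complex.add_re, h1]
  simp only [Complex.ofReal_re]
  congr 1
  exact integral_congr_ae (by filter_upwards with t; exact re_integrand hz t)

section Symm
variable (hsym : ∀ A : Set ℝ, MeasurableSet A → μ A = μ ((fun t : ℝ => -t) ⁻¹' A))
include hsym

lemma map_neg_eq : μ.map (fun t : ℝ => -t) = μ := by
  refine Measure.ext fun A hA => ?_
  rw [Measure.map_apply measurable_neg hA]
  exact (hsym A hA).symm

lemma integrable_comp_neg {g : ℝ → ℝ} (hg : Integrable g μ) :
    Integrable (fun t : ℝ => g (-t)) μ := by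
  have h1 : Integrable g (μ.map (fun t : ℝ => -t)) := by rw [map_neg_eq hsym]; exact hg
  have := (integrable_map_measure (by rw [map_neg_eq hsym]; exact hg.aestronglyMeasurable)
    measurable_neg.aemeasurable).mp h1
  exact this

lemma integral_comp_neg {g : ℝ → ℝ} (hg : Integrable g μ) :
    ∫ t : ℝ, g (-t) ∂μ = ∫ t : ℝ, g t ∂μ := by
  conv_rhs => rw [← map_neg_eq hsym]
  rw [integral_map measurable_neg.aemeasurable
    (by rw [map_neg_eq hsym]; exact hg.aestronglyMeasurable)]

end Symm

lemma re_fmap_bound (hz : z.im ≠ 0)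
    (hsym : ∀ A : Set ℝ, MeasurableSet A → μ A = μ ((fun t : ℝ => -t) ⁻¹' A)) :
    |(fmap β μ z).re - z.re - β| ≤ |z.re| * Ifun μ z := by
  set x := z.re with hx
  set y := z.im with hy
  set r2 := z.re^2 + z.im^2 with hr2
  set φ : ℝ → ℝ := fun t => (t * (1 - r2) + x * (t^2 - 1)) / ((t - x)^2 + y^2) with hφ
  set h : ℝ → ℝ := fun t => (1 + t^2) / ((t - x)^2 + y^2) with hh
  have hApos : ∀ t : ℝ, 0 < (t - x)^2 + y^2 := A_pos hz
  have hy2 : (0:ℝ) < y^2 := by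
    nlinarith [_root_.sq_abs y, abs_pos.mpr hz]
  have hBpos : ∀ t : ℝ, 0 < (t + x)^2 + y^2 := by
    intro t; nlinarith [sq_nonneg (t + x)]
  have hφint : Integrable φ μ := by
    refine ((integrable_main (μ := μ) hz).re).congr ?_
    filter_upwards with t
    exact re_integrand hz t
  have hφnegint : Integrable (fun t => φ (-t)) μ := integrable_comp_neg hsym hφint
  have hhint : Integrable h μ := integrable_I hz
  have hhnegint : Integrable (fun t => h (-t)) μ := integrable_comp_neg hsym hhint
  set ψ : ℝ → ℝ := fun t => (φ t + φ (-t)) / 2 with hψ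
  have hψint : Integrable ψ μ := (hφint.add hφnegint).div_const 2
  have hintφψ : ∫ t, φ t ∂μ = ∫ t, ψ t ∂μ := by
    rw [hψ]
    simp only
    rw [integral_div, integral_add hφint hφnegint, integral_comp_neg hsym hφint]
    ring
  set σ : ℝ → ℝ := fun t => (1 + t^2) * (t^2 + r2) / (((t - x)^2 + y^2) * ((t + x)^2 + y^2))
    with hσ
  have hσ_eq : ∀ t, σ t = (h t + h (-t)) / 2 := by
    intro t
    have hA := (hApos t).ne'
    have hB := (hBpos t).ne'
    rw [hσ, hh]
    simp only
    have hAB : ((-t : ℝ) - x)^2 + y^2 = (t + x)^2 + y^2 := by ring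
    rw [hAB]
    field_simp
    ring
  have hσint : Integrable σ μ := by
    refine ((hhint.add hhnegint).div_const 2).congr ?_
    filter_upwards with t
    exact (hσ_eq t).symm
  have hσI : ∫ t, σ t ∂μ = Ifun μ z := by
    have : ∫ t, σ t ∂μ = ∫ t, (h t + h (-t)) / 2 ∂μ :=
      integral_congr_ae (by filter_upwards with t; exact hσ_eq t)
    rw [this, integral_div, integral_add hhint hhnegint, integral_comp_neg hsym hhint]
    have hIeq : Ifun μ z = ∫ t, h t ∂μ := rfl
    rw [hIeq]
    ring
  have hψ_bound : ∀ t, |ψ t| ≤ |x| * σ t := by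
    intro t
    have hA := hApos t
    have hB := hBpos t
    have hψ_eq : ψ t = x * ((t^2 + 1) * (t^2 - r2)) / (((t - x)^2 + y^2) * ((t + x)^2 + y^2)) := by
      rw [hψ, hφ]
      simp only
      have hAB : ((-t : ℝ) - x)^2 + y^2 = (t + x)^2 + y^2 := by ring
      rw [hAB]
      field_simp
      ring
    have h1 : |x * ((t^2 + 1) * (t^2 - r2))| ≤ |x| * ((1 + t^2) * (t^2 + r2)) := by
      rw [abs_mul]
      refine mul_le_mul_of_nonneg_left ?_ (abs_nonneg x)
      rw [abs_mul]
      have h2 : |t^2 + 1| = t^2 + 1 := abs_of_pos (by positivity)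
      have h3 : |t^2 - r2| ≤ t^2 + r2 := by
        have hr : (0:ℝ) ≤ r2 := by rw [hr2]; positivity
        rw [abs_le]; constructor <;> nlinarith [sq_nonneg t]
      rw [h2]
      nlinarith [sq_nonneg t, abs_nonneg (t^2 - r2)]
    rw [hψ_eq, hσ]
    simp only
    rw [abs_div, abs_of_pos (by positivity : (0:ℝ) < ((t - x)^2 + y^2) * ((t + x)^2 + y^2)),
      ← mul_div_assoc]
    gcongr
  have key : |∫ t, φ t ∂μ| ≤ |x| * Ifun μ z := by
    rw [hintφψ]
    calc |∫ t, ψ t ∂μ| ≤ ∫ t, |ψ t| ∂μ := by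
          simpa [Real.norm_eq_abs] using norm_integral_le_integral_norm (μ := μ) ψ
      _ ≤ ∫ t, |x| * σ t ∂μ := by
          refine integral_mono hψint.abs (hσint.const_mul _) ?_
          intro t
          exact hψ_bound t
      _ = |x| * Ifun μ z := by rw [integral_const_mul, hσI]
  have e1 : ∫ t : ℝ, (t * (1 - (z.re^2 + z.im^2)) + z.re * (t^2 - 1)) / ((t - z.re)^2 + z.im^2) ∂μ
      = ∫ t, φ t ∂μ := by
    rw [hφ, hx, hr2, hy]
  have e2 : z.re + β + (∫ t, φ t ∂μ) - z.re - β = ∫ t, φ t ∂μ := by ring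
  rw [re_fmap (β := β) hz, e1, e2]
  exact key

lemma tendsto_im_atTop
    (hsym : ∀ A : Set ℝ, MeasurableSet A → μ A = μ ((fun t : ℝ => -t) ⁻¹' A))
    (hμ : ¬ Integrable (fun t : ℝ => t) μ) (hβ : β ≠ 0) (z₀ : ℂ) (hz₀ : 0 < z₀.im) :
    Tendsto (fun n : ℕ => ((fmap β μ)^[n] z₀).im) atTop atTop := by
  set Z : ℕ → ℂ := fun n => (fmap β μ)^[n] z₀ with hZ
  have hZsucc : ∀ n, Z (n+1) = fmap β μ (Z n) := fun n =>
    Function.iterate_succ_apply' (fmap β μ) n z₀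
  have him : ∀ n, 0 < (Z n).im := by
    intro n
    induction n with
    | zero => exact hz₀
    | succ n ih =>
        rw [hZsucc n, im_fmap ih.ne']
        have := Ifun_nonneg (μ := μ) ih.ne'
        nlinarith
  set y : ℕ → ℝ := fun n => (Z n).im with hy
  set I : ℕ → ℝ := fun n => Ifun μ (Z n) with hI
  have hInn : ∀ n, 0 ≤ I n := fun n => Ifun_nonneg (him n).ne'
  have hyrec : ∀ n, y (n+1) = y n * (1 + I n) := by
    intro n
    show (Z (n+1)).im = _
    rw [hZsucc n, im_fmap (him n).ne']
  have hymono : Monotone y := by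
    apply monotone_nat_of_le_succ
    intro n
    rw [hyrec n]
    nlinarith [him n, hInn n]
  rcases tendsto_of_monotone hymono with h | ⟨L, hL⟩
  · exact h
  exfalso
  have hyL : ∀ n, y n ≤ L := fun n => Monotone.ge_of_tendsto hymono hL n
  have hy0 : 0 < y 0 := him 0
  have hL0 : 0 < L := lt_of_lt_of_le hy0 (hyL 0)
  -- partial sums of I n are bounded
  have hprod : ∀ N, y 0 * (1 + ∑ k ∈ Finset.range N, I k) ≤ y N := by
    intro N
    induction N with
    | zero => simp
    | succ N ih =>
        rw [Finset.sum_range_succ, hyrec N]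
        have h1 : y 0 * (1 + ∑ k ∈ Finset.range N, I k) ≤ y N := ih
        have h2 : 0 ≤ ∑ k ∈ Finset.range N, I k := Finset.sum_nonneg fun k _ => hInn k
        have h3 : y 0 ≤ y N := hymono (Nat.zero_le N)
        nlinarith [mul_nonneg (hInn N) (sub_nonneg.mpr h3)]
  have hsumI : ∀ N, ∑ k ∈ Finset.range N, I k ≤ L / y 0 := by
    intro N
    have h1 := (hprod N).trans (hyL N)
    rw [le_div_iff₀ hy0]
    nlinarith
  -- linear growth of |x n|
  set x : ℕ → ℝ := fun n => (Z n).re with hx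
  have hxrec : ∀ n, |x (n+1)| ≤ |x n| * (1 + I n) + |β| := by
    intro n
    have h1 : |x (n+1) - x n - β| ≤ |x n| * I n := by
      have := re_fmap_bound (β := β) (him n).ne' hsym
      rw [← hZsucc n] at this
      exact this
    have h2 : |x (n+1)| ≤ |x (n+1) - x n - β| + |x n| + |β| := by
      have := abs_add_le (x (n+1) - x n - β) (x n + β)
      have h3 := abs_add_le (x n) β
      calc |x (n+1)| = |(x (n+1) - x n - β) + (x n + β)| := by congr 1; ring
        _ ≤ |x (n+1) - x n - β| + |x n + β| := abs_add_le _ _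
        _ ≤ |x (n+1) - x n - β| + |x n| + |β| := by linarith
    nlinarith [abs_nonneg (x n)]
  have hxlin : ∀ n, |x n| ≤ (|x 0| + |β| * n) * (y n / y 0) := by
    intro n
    induction n with
    | zero => simp [div_self hy0.ne']
    | succ n ih =>
        have h1 := hxrec n
        have h2 : y (n+1) = y n * (1 + I n) := hyrec n
        have h3 : y 0 ≤ y (n+1) := hymono (Nat.zero_le _)
        have h4 : 0 < y n := him n
        have h5 : 0 ≤ |x 0| + |β| * n := by positivity
        have h6 : 0 ≤ I n := hInn n
        have h7 : |x n| * (1 + I n) ≤ (|x 0| + |β| * n) * (y (n+1) / y 0) := by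
          rw [h2]
          calc |x n| * (1 + I n) ≤ ((|x 0| + |β| * n) * (y n / y 0)) * (1 + I n) := by
                nlinarith [abs_nonneg (x n)]
            _ = (|x 0| + |β| * n) * (y n * (1 + I n) / y 0) := by ring
        have h8 : |β| ≤ |β| * (y (n+1) / y 0) := by
          have : 1 ≤ y (n+1) / y 0 := (one_le_div hy0).mpr h3
          nlinarith [abs_nonneg β]
        push_cast
        calc |x (n+1)| ≤ |x n| * (1 + I n) + |β| := h1
          _ ≤ (|x 0| + |β| * n) * (y (n+1) / y 0) + |β| * (y (n+1) / y 0) := by linarith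
          _ = (|x 0| + |β| * (n+1)) * (y (n+1) / y 0) := by push_cast; ring
  set a : ℝ := |x 0| * (L / y 0) with ha
  set b : ℝ := |β| * (L / y 0) with hb
  have hb0 : 0 < b := by
    have : 0 < |β| := abs_pos.mpr hβ
    positivity
  have ha0 : 0 ≤ a := by positivity
  have hxbound : ∀ n : ℕ, |x n| ≤ a + b * n := by
    intro n
    have h1 := hxlin n
    have h2 : y n / y 0 ≤ L / y 0 := by gcongr; exact hyL n
    have h3 : 0 ≤ |x 0| + |β| * n := by positivity
    have h4 : 0 ≤ y n / y 0 := div_nonneg (le_of_lt (him n)) (le_of_lt hy0)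
    calc |x n| ≤ (|x 0| + |β| * n) * (y n / y 0) := h1
      _ ≤ (|x 0| + |β| * n) * (L / y 0) := by nlinarith
      _ = a + b * n := by rw [ha, hb]; ring
  -- the tail-measure estimate
  set E : ℕ → Set ℝ := fun n => {t : ℝ | a + b * n ≤ |t|} with hE
  have hEmeas : ∀ n, MeasurableSet (E n) := by
    intro n
    have : E n = (fun t : ℝ => |t|) ⁻¹' (Set.Ici (a + b * n)) := rfl
    rw [this]
    exact (measurable_abs) measurableSet_Ici
  have htail : ∀ n : ℕ, μ (E n) ≤ ENNReal.ofReal ((4 + L^2) * I n) := by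
    intro n
    have hyn := him n
    set g : ℝ → ℝ := fun t => (4 + L^2) * ((1 + t^2) / ((t - x n)^2 + (y n)^2)) with hg
    have hgint : Integrable g μ := (integrable_I (μ := μ) hyn.ne').const_mul _
    have hyn' : 0 < y n := him n
    have hdenpos : ∀ t : ℝ, 0 < (t - x n)^2 + (y n)^2 := by
      intro t
      nlinarith [sq_nonneg (t - x n), pow_pos hyn' 2]
    have hnum : Continuous fun t : ℝ => 1 + t^2 := by continuity
    have hden : Continuous fun t : ℝ => (t - x n)^2 + (y n)^2 := by continuity
    have hgcont : Continuous g := continuous_const.mul (hnum.div hden fun t => (hdenpos t).ne')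
    have hgnn : ∀ t, 0 ≤ g t := by
      intro t
      exact mul_nonneg (by positivity) (div_nonneg (by positivity) (hdenpos t).le)
    have hgI : ∫ t, g t ∂μ = (4 + L^2) * I n := by
      rw [hg, integral_const_mul]
      rfl
    have hpt : ∀ t ∈ E n, (1 : ENNReal) ≤ ENNReal.ofReal (g t) := by
      intro t ht
      rw [ENNReal.one_le_ofReal]
      have habs : |x n| ≤ |t| := le_trans (hxbound n) ht
      have h1 : (t - x n)^2 ≤ 4 * t^2 := by
        have e1 : |t - x n| ≤ |t| + |x n| := abs_sub t (x n)
        nlinarith [_root_.sq_abs t, _root_.sq_abs (x n), abs_nonneg t, abs_nonneg (x n),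
          _root_.sq_abs (t - x n), sq_nonneg (|t| + |x n|), abs_nonneg (t - x n)]
      have h2 : (y n)^2 ≤ L^2 := by nlinarith [hyL n, him n]
      have h3 : (t - x n)^2 + (y n)^2 ≤ (4 + L^2) * (1 + t^2) := by nlinarith [sq_nonneg t, sq_nonneg (t * L)]
      have h4 : 0 < (t - x n)^2 + (y n)^2 := hdenpos t
      show (1:ℝ) ≤ (4 + L^2) * ((1 + t^2) / ((t - x n)^2 + (y n)^2))
      rw [mul_div_assoc', le_div_iff₀ h4]
      linarith
    calc μ (E n) = ∫⁻ t in E n, 1 ∂μ := (setLIntegral_one _).symm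
      _ ≤ ∫⁻ t in E n, ENNReal.ofReal (g t) ∂μ := by
          refine setLIntegral_mono ?_ hpt
          exact ENNReal.measurable_ofReal.comp hgcont.measurable
      _ ≤ ∫⁻ t, ENNReal.ofReal (g t) ∂μ := setLIntegral_le_lintegral _ _
      _ = ENNReal.ofReal (∫ t, g t ∂μ) := (ofReal_integral_eq_lintegral_ofReal hgint
            (Filter.Eventually.of_forall hgnn)).symm
      _ = ENNReal.ofReal ((4 + L^2) * I n) := by rw [hgI]
  -- sum the tail bounds
  have hsum : ∑' n : ℕ, μ (E n) ≤ ENNReal.ofReal ((4 + L^2) * (L / y 0)) := by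
    rw [ENNReal.tsum_eq_iSup_sum]
    refine iSup_le fun s => ?_
    calc ∑ n ∈ s, μ (E n) ≤ ∑ n ∈ s, ENNReal.ofReal ((4 + L^2) * I n) :=
          Finset.sum_le_sum fun n _ => htail n
      _ = ENNReal.ofReal (∑ n ∈ s, (4 + L^2) * I n) := by
          rw [ENNReal.ofReal_sum_of_nonneg]
          intro n _
          have := hInn n
          positivity
      _ ≤ ENNReal.ofReal ((4 + L^2) * (L / y 0)) := by
          apply ENNReal.ofReal_le_ofReal
          rw [← Finset.mul_sum]
          have hsub : s ⊆ Finset.range (s.sup id + 1) := by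
            intro n hn
            simp only [Finset.mem_range]
            exact Nat.lt_succ_of_le (Finset.le_sup (f := id) hn)
          have h1 : ∑ n ∈ s, I n ≤ ∑ n ∈ Finset.range (s.sup id + 1), I n :=
            Finset.sum_le_sum_of_subset_of_nonneg hsub fun n _ _ => hInn n
          have h2 := hsumI (s.sup id + 1)
          have h3 : (0:ℝ) ≤ 4 + L^2 := by positivity
          nlinarith
  -- divergence of the first absolute moment
  have hdiv : ∫⁻ t : ℝ, ENNReal.ofReal |t| ∂μ = ⊤ := by
    by_contra h'
    apply hμ
    refine ⟨measurable_id.aestronglyMeasurable, ?_⟩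
    rw [hasFiniteIntegral_iff_norm]
    have : ∀ t : ℝ, ENNReal.ofReal ‖t‖ = ENNReal.ofReal |t| := by
      intro t; rw [Real.norm_eq_abs]
    simp only [this]
    exact lt_top_iff_ne_top.mpr h'
  -- pointwise counting bound
  have hcount : ∀ t : ℝ, ENNReal.ofReal |t| ≤ ENNReal.ofReal a
      + ∑' n : ℕ, Set.indicator (E n) (fun _ => ENNReal.ofReal b) t := by
    intro t
    rcases le_or_gt |t| a with h | h
    · exact le_add_right (ENNReal.ofReal_le_ofReal h)
    · set m : ℕ := Nat.floor ((|t| - a) / b) with hm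
      have hta : 0 ≤ |t| - a := by linarith
      have hmem : ∀ n : ℕ, n ≤ m → t ∈ E n := by
        intro n hn
        have h1 : (n:ℝ) ≤ (|t| - a) / b := le_trans (Nat.cast_le.mpr hn) (Nat.floor_le (by positivity))
        have h2 : b * n ≤ |t| - a := by
          rw [le_div_iff₀ hb0] at h1
          linarith
        show a + b * n ≤ |t|
        linarith
      have hup : |t| ≤ a + b * (m + 1) := by
        have h1 : (|t| - a) / b < m + 1 := Nat.lt_floor_add_one _
        have h2 : |t| - a < b * (m + 1) := by
          rw [div_lt_iff₀ hb0] at h1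
          linarith [h1]
        linarith
      have hlow : ENNReal.ofReal (b * (m + 1)) ≤
          ∑' n : ℕ, Set.indicator (E n) (fun _ => ENNReal.ofReal b) t := by
        have h1 : ∀ n ∈ Finset.range (m + 1),
            Set.indicator (E n) (fun _ => ENNReal.ofReal b) t = ENNReal.ofReal b := by
          intro n hn
          rw [Set.indicator_of_mem (hmem n (Nat.lt_succ_iff.mp (Finset.mem_range.mp hn)))]
        calc ENNReal.ofReal (b * (m + 1)) = ENNReal.ofReal b * ((m:ℝ≥0∞) + 1) := by
              rw [ENNReal.ofReal_mul hb0.le]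
              congr 1
              rw [show ((m:ℝ) + 1) = ((m + 1 : ℕ) : ℝ) by push_cast; ring,
                ENNReal.ofReal_natCast]
              push_cast
              ring
          _ = ∑ n ∈ Finset.range (m + 1), Set.indicator (E n) (fun _ => ENNReal.ofReal b) t := by
              rw [Finset.sum_congr rfl h1, Finset.sum_const, Finset.card_range,
                nsmul_eq_mul, mul_comm]
              push_cast
              ring
          _ ≤ ∑' n : ℕ, Set.indicator (E n) (fun _ => ENNReal.ofReal b) t :=
              ENNReal.sum_le_tsum _
      calc ENNReal.ofReal |t| ≤ ENNReal.ofReal (a + b * (m + 1)) := ENNReal.ofReal_le_ofReal hup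
        _ = ENNReal.ofReal a + ENNReal.ofReal (b * (m + 1)) := by
            rw [ENNReal.ofReal_add ha0 (by positivity)]
        _ ≤ ENNReal.ofReal a + ∑' n, Set.indicator (E n) (fun _ => ENNReal.ofReal b) t := by
            exact add_le_add_right hlow _
  -- integrate the counting bound
  have hfinal : ∫⁻ t : ℝ, ENNReal.ofReal |t| ∂μ ≤ ENNReal.ofReal a * μ Set.univ
      + ENNReal.ofReal b * ∑' n : ℕ, μ (E n) := by
    calc ∫⁻ t : ℝ, ENNReal.ofReal |t| ∂μ
        ≤ ∫⁻ t : ℝ, (ENNReal.ofReal a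
            + ∑' n : ℕ, Set.indicator (E n) (fun _ => ENNReal.ofReal b) t) ∂μ :=
          lintegral_mono hcount
      _ = ENNReal.ofReal a * μ Set.univ
            + ∫⁻ t : ℝ, ∑' n : ℕ, Set.indicator (E n) (fun _ => ENNReal.ofReal b) t ∂μ := by
          rw [lintegral_add_left measurable_const, lintegral_const]
      _ = ENNReal.ofReal a * μ Set.univ + ∑' n : ℕ, ENNReal.ofReal b * μ (E n) := by
          congr 1
          rw [lintegral_tsum fun n => (measurable_const.indicator (hEmeas n)).aemeasurable]
          congr 1
          funext n
          rw [lintegral_indicator (hEmeas n), setLIntegral_const]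
      _ = ENNReal.ofReal a * μ Set.univ + ENNReal.ofReal b * ∑' n : ℕ, μ (E n) := by
          rw [ENNReal.tsum_mul_left]
  rw [hdiv] at hfinal
  have hfin : ENNReal.ofReal a * μ Set.univ + ENNReal.ofReal b * ∑' n : ℕ, μ (E n) < ⊤ := by
    apply ENNReal.add_lt_top.mpr
    constructor
    · exact ENNReal.mul_lt_top ENNReal.ofReal_lt_top (measure_lt_top μ _)
    · exact ENNReal.mul_lt_top ENNReal.ofReal_lt_top
        (lt_of_le_of_lt hsum ENNReal.ofReal_lt_top)
  exact hfin.not_ge hfinal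

end Stmt13Aux

open Stmt13Aux in
theorem stmt_13 (β : ℝ) (μ : Measure ℝ) [IsFiniteMeasure μ]
    (hsym : ∀ A : Set ℝ, MeasurableSet A → μ A = μ ((fun t : ℝ => -t) ⁻¹' A))
    (hμ : ¬ Integrable (fun t : ℝ => t) μ) (hβ : β ≠ 0) :
    ∀ z₀ : ℂ, 0 < z₀.im →
      Tendsto
        (fun n : ℕ => |((fmap β μ)^[n] z₀).re| / (n * ((fmap β μ)^[n] z₀).im))
        atTop (𝓝 0) := by
  intro z₀ hz₀
  set Z : ℕ → ℂ := fun n => (fmap β μ)^[n] z₀ with hZ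
  have hZsucc : ∀ n, Z (n+1) = fmap β μ (Z n) := fun n =>
    Function.iterate_succ_apply' (fmap β μ) n z₀
  have him : ∀ n, 0 < (Z n).im := by
    intro n
    induction n with
    | zero => exact hz₀
    | succ n ih =>
        rw [hZsucc n, im_fmap ih.ne']
        have := Ifun_nonneg (μ := μ) ih.ne'
        nlinarith
  set y : ℕ → ℝ := fun n => (Z n).im with hy
  set x : ℕ → ℝ := fun n => (Z n).re with hx
  set I : ℕ → ℝ := fun n => Ifun μ (Z n) with hI
  have hInn : ∀ n, 0 ≤ I n := fun n => Ifun_nonneg (him n).ne'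
  have hyrec : ∀ n, y (n+1) = y n * (1 + I n) := by
    intro n
    show (Z (n+1)).im = _
    rw [hZsucc n, im_fmap (him n).ne']
  have hxrec : ∀ n, |x (n+1)| ≤ |x n| * (1 + I n) + |β| := by
    intro n
    have h1 : |x (n+1) - x n - β| ≤ |x n| * I n := by
      have := re_fmap_bound (β := β) (him n).ne' hsym
      rw [← hZsucc n] at this
      exact this
    have h2 : |x (n+1)| ≤ |x (n+1) - x n - β| + |x n + β| := by
      calc |x (n+1)| = |(x (n+1) - x n - β) + (x n + β)| := by congr 1; ring
        _ ≤ |x (n+1) - x n - β| + |x n + β| := abs_add_le _ _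
    have h3 := abs_add_le (x n) β
    nlinarith [abs_nonneg (x n)]
  set B : ℕ → ℝ := fun n => |x 0| / y 0 + |β| * ∑ k ∈ Finset.range n, (y (k+1))⁻¹ with hB
  have hy0 : 0 < y 0 := him 0
  have hxB : ∀ n, |x n| ≤ y n * B n := by
    intro n
    induction n with
    | zero =>
        rw [hB]
        simp only [Finset.range_zero, Finset.sum_empty, mul_zero, add_zero]
        rw [mul_div_cancel₀]
        exact hy0.ne'
    | succ n ih =>
        have h1 := hxrec n
        have h2 : y (n+1) = y n * (1 + I n) := hyrec n
        have h3 : 0 < y (n+1) := him (n+1)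
        have h4 : B (n+1) = B n + |β| * (y (n+1))⁻¹ := by
          rw [hB]
          simp only [Finset.sum_range_succ]
          ring
        have h5 : |x n| * (1 + I n) ≤ y (n+1) * B n := by
          rw [h2]
          have hBnn : 0 ≤ B n := by
            rw [hB]
            have : 0 ≤ ∑ k ∈ Finset.range n, (y (k+1))⁻¹ :=
              Finset.sum_nonneg fun k _ => inv_nonneg.mpr (him (k+1)).le
            positivity
          nlinarith [abs_nonneg (x n), hInn n, him n, ih]
        have h6 : |β| = y (n+1) * (|β| * (y (n+1))⁻¹) := by
          field_simp
        calc |x (n+1)| ≤ |x n| * (1 + I n) + |β| := h1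
          _ ≤ y (n+1) * B n + y (n+1) * (|β| * (y (n+1))⁻¹) := by rw [← h6]; linarith
          _ = y (n+1) * B (n+1) := by rw [h4]; ring
  have htends : Tendsto y atTop atTop := tendsto_im_atTop hsym hμ hβ z₀ hz₀
  have hyinv : Tendsto (fun n : ℕ => (y (n+1))⁻¹) atTop (𝓝 0) := by
    have h1 : Tendsto (fun n : ℕ => y (n+1)) atTop atTop :=
      htends.comp (tendsto_add_atTop_nat 1)
    exact h1.inv_tendsto_atTop
  have hces := hyinv.cesaro
  have hupper : Tendsto (fun n : ℕ => (n:ℝ)⁻¹ * B n) atTop (𝓝 0) := by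
    have h1 : Tendsto (fun n : ℕ => (|x 0| / y 0) * (n:ℝ)⁻¹) atTop (𝓝 0) := by
      have := tendsto_inv_atTop_nhds_zero_nat.const_mul (|x 0| / y 0)
      simpa using this
    have h2 : Tendsto (fun n : ℕ =>
        |β| * ((n:ℝ)⁻¹ * ∑ k ∈ Finset.range n, (y (k+1))⁻¹)) atTop (𝓝 0) := by
      have := hces.const_mul |β|
      simpa using this
    have h3 := h1.add h2
    rw [add_zero] at h3
    refine h3.congr fun n => ?_
    rw [hB]
    ring
  have hle : ∀ n : ℕ, |x n| / (n * y n) ≤ (n:ℝ)⁻¹ * B n := by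
    intro n
    rcases Nat.eq_zero_or_pos n with h | h
    · subst h
      simp
    · have hn : (0:ℝ) < n := by exact_mod_cast h
      have hpos : (0:ℝ) < (n:ℝ) * y n := mul_pos hn (him n)
      rw [div_le_iff₀ hpos]
      have e : (n:ℝ)⁻¹ * B n * ((n:ℝ) * y n) = y n * B n := by
        field_simp
      rw [e]
      exact hxB n
  have hge : ∀ n : ℕ, 0 ≤ |x n| / (n * y n) := by
    intro n
    apply div_nonneg (abs_nonneg _)
    have := (him n).le
    positivity
  exact tendsto_of_tendsto_of_tendsto_of_le_of_le tendsto_const_nhds hupper hge hle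
end

section
/- Let a ∈ ℝ and let μ be a finite positive Borel measure on ℝ with μ((a,+∞)) = 0 and ∫_ℝ |t| dμ(t) = ∞. For real x > a define p(x) = ∫_{(−∞,a]} (1+tx)/(t−x) dμ(t) (a real number). Then p(x) → +∞ as x → +∞. Moreover, p is increasing on (a,+∞), and for every x > a and y ∈ ℝ one has Re p(x+iy) ≥ p(x), where p(z) = ∫_{(−∞,a]} (1+tz)/(t−z) dμ(t) for complex z ∉ (−∞,a]. -/
open MeasureTheory Filter Complex Topology

lemma aux_id (t x : ℝ) (ht : t < x) :
    (1 + t * x) / (t - x) = -t - (1 + t^2) / (x - t) := by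
  have h1 : t - x ≠ 0 := by linarith
  have h2 : x - t ≠ 0 := by linarith
  field_simp
  ring

lemma aux_integrable (a x : ℝ) (μ : Measure ℝ) [IsFiniteMeasure μ] (hx : a < x) :
    IntegrableOn (fun t : ℝ => (1 + t * x) / (t - x)) (Set.Iic a) μ := by
  have hmeas : Measurable (fun t : ℝ => (1 + t * x) / (t - x)) :=
    (measurable_const.add (measurable_id.mul measurable_const)).div
      (measurable_id.sub measurable_const)
  refine Integrable.mono' (integrable_const (|x| + (1 + x^2) / (x - a)))
    hmeas.aestronglyMeasurable ?_
  filter_upwards [ae_restrict_mem measurableSet_Iic] with t ht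
  have hta : t ≤ a := ht
  have htx : t < x := lt_of_le_of_lt ht hx
  have h2 : (0:ℝ) < x - t := by linarith
  have hid : (1 + t * x) / (t - x) = x - (1 + x^2) / (x - t) := by
    have h1 : t - x ≠ 0 := by linarith
    field_simp
    ring
  rw [hid, Real.norm_eq_abs]
  have hu0 : 0 ≤ (1 + x^2) / (x - t) := by positivity
  have hu1 : (1 + x^2) / (x - t) ≤ (1 + x^2) / (x - a) := by
    apply div_le_div_of_nonneg_left (by positivity) (by linarith) (by linarith : x - a ≤ x - t)
  calc |x - (1 + x^2) / (x - t)| ≤ |x| + |(1 + x^2) / (x - t)| := abs_sub _ _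
    _ ≤ |x| + (1 + x^2) / (x - a) := by rw [_root_.abs_of_nonneg hu0]; linarith

lemma aux_mono (a : ℝ) (μ : Measure ℝ) [IsFiniteMeasure μ]
    (hsupp : μ (Set.Ioi a) = 0) (hL1 : ¬ Integrable (fun t : ℝ => t) μ) :
    StrictMonoOn (fun x : ℝ => ∫ t in Set.Iic a, (1 + t * x) / (t - x) ∂μ)
      (Set.Ioi a) := by
  have hIic : 0 < μ (Set.Iic a) := by
    rcases eq_or_lt_of_le (show (0:ENNReal) ≤ μ (Set.Iic a) from zero_le) with h | h
    · exfalso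
      apply hL1
      have huniv : μ Set.univ = 0 := by
        have : μ Set.univ ≤ μ (Set.Iic a) + μ (Set.Ioi a) := by
          rw [← Set.Iic_union_Ioi (a := a)]
          exact measure_union_le _ _
        simpa [hsupp, ← h] using this
      have : μ = 0 := Measure.measure_univ_eq_zero.mp huniv
      simp [this]
    · exact h
  intro x hx y hy hxy
  simp only
  have hix := aux_integrable a x μ hx
  have hiy := aux_integrable a y μ hy
  rw [← sub_pos, ← integral_sub hiy hix]
  have hpos : ∀ t ∈ Set.Iic a,
      0 < (1 + t * y) / (t - y) - (1 + t * x) / (t - x) := by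
    intro t ht
    have hta : t ≤ a := ht
    have h1 : t < x := lt_of_le_of_lt hta hx
    have h2 : t < y := lt_of_le_of_lt hta hy
    have hid : (1 + t * y) / (t - y) - (1 + t * x) / (t - x)
        = (y - x) * (1 + t^2) / ((x - t) * (y - t)) := by
      have e1 : t - x ≠ 0 := by linarith
      have e2 : t - y ≠ 0 := by linarith
      have e3 : (x - t) * (y - t) ≠ 0 := by
        have : (0:ℝ) < (x - t) * (y - t) := by nlinarith
        exact ne_of_gt this
      rw [div_sub_div _ _ e2 e1, div_eq_div_iff (mul_ne_zero e2 e1) e3]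
      ring
    rw [hid]
    exact div_pos (by nlinarith) (by nlinarith)
  rw [setIntegral_pos_iff_support_of_nonneg_ae]
  · refine lt_of_lt_of_le hIic (measure_mono ?_)
    intro t ht
    exact ⟨ne_of_gt (hpos t ht), ht⟩
  · filter_upwards [ae_restrict_mem measurableSet_Iic] with t ht
    exact le_of_lt (hpos t ht)
  · exact hiy.sub hix

lemma aux_unbdd (a : ℝ) (μ : Measure ℝ) [IsFiniteMeasure μ]
    (hsupp : μ (Set.Ioi a) = 0) (hL1 : ¬ Integrable (fun t : ℝ => t) μ) (M : ℝ) :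
    ∃ x : ℝ, a < x ∧ M < ∫ t in Set.Iic a, (1 + t * x) / (t - x) ∂μ := by
  by_contra hcon
  push_neg at hcon
  apply hL1
  have hae : ∀ᵐ t ∂μ, t ∈ Set.Iic a := by
    rw [ae_iff]
    simp only [Set.mem_Iic, not_le]
    exact hsupp
  have hrest : μ.restrict (Set.Iic a) = μ := Measure.restrict_eq_self_of_ae_mem hae
  set x₀ : ℝ := a + 1 with hx₀
  have hx₀a : a < x₀ := by simp [hx₀]
  set f : ℕ → ℝ → ℝ :=
    fun n t => (1 + t * (x₀ + n)) / (t - (x₀ + n)) - (1 + t * x₀) / (t - x₀) with hf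
  set H : ℝ → ℝ := fun t => (1 + t^2) / (x₀ - t) with hH
  have hidn : ∀ (n : ℕ) (t : ℝ), t ≤ a →
      f n t = (1 + t^2) / (x₀ - t) - (1 + t^2) / (x₀ + n - t) := by
    intro n t ht
    have h1 : t < x₀ := by linarith
    have hn : (0:ℝ) ≤ n := Nat.cast_nonneg n
    have h2 : t < x₀ + n := by linarith
    simp only [hf]
    rw [aux_id t (x₀ + n) h2, aux_id t x₀ h1]
    ring_nf
  have hmeasf : ∀ n, Measurable (f n) := by
    intro n
    exact ((measurable_const.add (measurable_id.mul measurable_const)).div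
      (measurable_id.sub measurable_const)).sub
      ((measurable_const.add (measurable_id.mul measurable_const)).div
      (measurable_id.sub measurable_const))
  have hintf : ∀ n : ℕ, IntegrableOn (f n) (Set.Iic a) μ := by
    intro n
    have hn : (0:ℝ) ≤ n := Nat.cast_nonneg n
    exact (aux_integrable a (x₀ + n) μ (by linarith)).sub (aux_integrable a x₀ μ hx₀a)
  have hnnf : ∀ (n : ℕ) (t : ℝ), t ≤ a → 0 ≤ f n t := by
    intro n t ht
    have hn : (0:ℝ) ≤ n := Nat.cast_nonneg n
    rw [hidn n t ht]
    have : (1 + t^2) / (x₀ + n - t) ≤ (1 + t^2) / (x₀ - t) :=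
      div_le_div_of_nonneg_left (by positivity) (by linarith) (by linarith)
    linarith
  set F : ℕ → ℝ → ENNReal := fun n t => ENNReal.ofReal (f n t) with hF
  have key : Tendsto (fun n => ∫⁻ t, F n t ∂μ) atTop
      (𝓝 (∫⁻ t, ENNReal.ofReal (H t) ∂μ)) := by
    apply lintegral_tendsto_of_tendsto_of_monotone
    · exact fun n => ((hmeasf n).ennreal_ofReal).aemeasurable
    · filter_upwards [hae] with t ht
      have hta : t ≤ a := ht
      intro n m hnm
      apply ENNReal.ofReal_le_ofReal
      rw [hidn n t ht, hidn m t ht]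
      have hn : (0:ℝ) ≤ n := Nat.cast_nonneg n
      have hnm' : (n:ℝ) ≤ m := Nat.cast_le.mpr hnm
      have : (1 + t^2) / (x₀ + m - t) ≤ (1 + t^2) / (x₀ + n - t) :=
        div_le_div_of_nonneg_left (by positivity) (by linarith) (by linarith)
      linarith
    · filter_upwards [hae] with t ht
      have hden : Tendsto (fun n : ℕ => x₀ + (n:ℝ) - t) atTop atTop := by
        apply Tendsto.congr (fun n => by ring :
          ∀ n : ℕ, (x₀ - t) + (n:ℝ) = x₀ + (n:ℝ) - t)
        exact tendsto_atTop_add_const_left _ _ tendsto_natCast_atTop_atTop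
      have ft : Tendsto (fun n : ℕ => f n t) atTop (𝓝 (H t)) := by
        have h0 : Tendsto (fun n : ℕ => (1 + t^2) / (x₀ - t) - (1 + t^2) / (x₀ + (n:ℝ) - t))
            atTop (𝓝 ((1 + t^2) / (x₀ - t) - 0)) :=
          tendsto_const_nhds.sub (Tendsto.div_atTop tendsto_const_nhds hden)
        rw [sub_zero] at h0
        exact h0.congr (fun n => (hidn n t ht).symm)
      exact (ENNReal.continuous_ofReal.tendsto _).comp ft
  have bound : ∀ n : ℕ, ∫⁻ t, F n t ∂μ ≤
      ENNReal.ofReal (M - ∫ t in Set.Iic a, (1 + t * x₀) / (t - x₀) ∂μ) := by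
    intro n
    have hn : (0:ℝ) ≤ n := Nat.cast_nonneg n
    have h1 : ∫⁻ t, F n t ∂μ = ENNReal.ofReal (∫ t in Set.Iic a, f n t ∂μ) := by
      conv_lhs => rw [← hrest]
      exact (ofReal_integral_eq_lintegral_ofReal (hintf n)
        ((ae_restrict_mem measurableSet_Iic).mono fun t ht => hnnf n t ht)).symm
    rw [h1]
    apply ENNReal.ofReal_le_ofReal
    have h2 : ∫ t in Set.Iic a, f n t ∂μ =
        (∫ t in Set.Iic a, (1 + t * (x₀ + n)) / (t - (x₀ + n)) ∂μ) -
        ∫ t in Set.Iic a, (1 + t * x₀) / (t - x₀) ∂μ := by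
      simp only [hf]
      exact integral_sub (aux_integrable a (x₀ + n) μ (by linarith)) (aux_integrable a x₀ μ hx₀a)
    rw [h2]
    have := hcon (x₀ + n) (by linarith)
    linarith
  have hfin : ∫⁻ t, ENNReal.ofReal (H t) ∂μ <ENNReal.ofReal (M - ∫ t in Set.Iic a, (1 + t * x₀) / (t - x₀) ∂μ) + 1 := by
    have := le_of_tendsto key (Filter.Eventually.of_forall bound)
    calc ∫⁻ t, ENNReal.ofReal (H t) ∂μ ≤ _ := this
      _ < _ := ENNReal.lt_add_right (by simp) one_ne_zero
  have hnnH : 0 ≤ᵐ[μ] H := by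
    filter_upwards [hae] with t ht
    have : t < x₀ := by exact lt_of_le_of_lt ht hx₀a
    simp only [hH]
    apply div_nonneg (by positivity) (by linarith)
  have hHmeas : Measurable H := by
    exact (measurable_const.add (measurable_id.pow_const 2)).div
      (measurable_const.sub measurable_id)
  have hHint : Integrable H μ :=
    ⟨hHmeas.aestronglyMeasurable, (hasFiniteIntegral_iff_ofReal hnnH).mpr (hfin.trans_le le_top)⟩
  have hint0 : Integrable (fun t : ℝ => (1 + t * x₀) / (t - x₀)) μ := by
    rw [← hrest]
    exact aux_integrable a x₀ μ hx₀a
  have : Integrable (fun t : ℝ => -(H t + (1 + t * x₀) / (t - x₀))) μ :=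
    (hHint.add hint0).neg
  apply this.congr
  filter_upwards [hae] with t ht
  have h1 : t < x₀ := lt_of_le_of_lt ht hx₀a
  rw [aux_id t x₀ h1]
  simp only [hH]
  ring

lemma aux_cx (a x y : ℝ) (μ : Measure ℝ) [IsFiniteMeasure μ] (hx : a < x) :
    (∫ t in Set.Iic a, (1 + t * x) / (t - x) ∂μ) ≤
        (∫ t in Set.Iic a,
          (1 + (t : ℂ) * ((x : ℂ) + (y : ℂ) * Complex.I)) /
            ((t : ℂ) - ((x : ℂ) + (y : ℂ) * Complex.I)) ∂μ).re := by
  set z : ℂ := (x : ℂ) + (y : ℂ) * Complex.I with hzdef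
  have hzre : z.re = x := by simp [hzdef]
  have hzim : z.im = y := by simp [hzdef]
  have hz : ∀ t : ℝ, t ≤ a → (t : ℂ) - z ≠ 0 := by
    intro t ht h
    have := congrArg Complex.re h
    simp [hzre] at this
    linarith
  have hmeas : Measurable (fun t : ℝ => (1 + (t : ℂ) * z) / ((t : ℂ) - z)) := by
    exact (measurable_const.add (Complex.measurable_ofReal.mul measurable_const)).div
      (Complex.measurable_ofReal.sub measurable_const)
  have hint : IntegrableOn (fun t : ℝ => (1 + (t : ℂ) * z) / ((t : ℂ) - z)) (Set.Iic a) μ := by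
    refine Integrable.mono' (integrable_const (‖z‖ + ‖1 + z^2‖ / (x - a)))
      hmeas.aestronglyMeasurable ?_
    filter_upwards [ae_restrict_mem measurableSet_Iic] with t ht
    have hta : t ≤ a := ht
    have hne := hz t hta
    have hid : (1 + (t : ℂ) * z) / ((t : ℂ) - z) = z + (1 + z^2) / ((t : ℂ) - z) := by
      field_simp
      ring
    rw [hid]
    have hnorm : x - a ≤ ‖(t : ℂ) - z‖ := by
      have h1 : |((t : ℂ) - z).re| ≤ ‖(t : ℂ) - z‖ := Complex.abs_re_le_norm _
      have h2 : ((t : ℂ) - z).re = t - x := by simp [hzre]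
      rw [h2] at h1
      calc x - a ≤ |t - x| := by rw [abs_of_nonpos (by linarith)]; linarith
        _ ≤ _ := h1
    calc ‖z + (1 + z^2) / ((t : ℂ) - z)‖ ≤ ‖z‖ + ‖(1 + z^2) / ((t : ℂ) - z)‖ := norm_add_le _ _
      _ ≤ ‖z‖ + ‖1 + z^2‖ / (x - a) := by
          rw [norm_div]
          gcongr
  have hptwise : ∀ t ∈ Set.Iic a,
      (1 + t * x) / (t - x) ≤ ((1 + (t : ℂ) * z) / ((t : ℂ) - z)).re := by
    intro t ht
    have hta : t ≤ a := ht
    have htx : t < x := lt_of_le_of_lt hta hx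
    have hne : t - x ≠ 0 := by linarith
    have h2 : (0:ℝ) < (t - x)^2 := pow_two_pos_of_ne_zero hne
    have hre : ((1 + (t : ℂ) * z) / ((t : ℂ) - z)).re =
        ((1 + t * x) * (t - x) + (t * y) * (-y)) / ((t - x)^2 + y^2) := by
      rw [Complex.div_re]
      simp only [Complex.add_re, Complex.add_im, Complex.one_re, Complex.one_im,
        Complex.mul_re, Complex.mul_im, Complex.ofReal_re, Complex.ofReal_im,
        Complex.sub_re, Complex.sub_im, Complex.normSq_apply, hzre, hzim]
      ring
    rw [hre]
    have hd : (0:ℝ) < (t - x)^2 + y^2 := by positivity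
    have hL : (1 + t * x) / (t - x) = ((1 + t * x) * (t - x)) / ((t - x)^2) := by
      rw [pow_two, mul_div_mul_right _ _ hne]
    rw [hL, div_le_div_iff₀ h2 hd]
    nlinarith [mul_nonneg (sq_nonneg y) (by nlinarith : (0:ℝ) ≤ (x - t) * (1 + t^2))]
  have hintre : IntegrableOn (fun t : ℝ => ((1 + (t : ℂ) * z) / ((t : ℂ) - z)).re)
      (Set.Iic a) μ := hint.re
  calc (∫ t in Set.Iic a, (1 + t * x) / (t - x) ∂μ)
      ≤ ∫ t in Set.Iic a, ((1 + (t : ℂ) * z) / ((t : ℂ) - z)).re ∂μ :=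
        setIntegral_mono_on (aux_integrable a x μ hx) hintre measurableSet_Iic hptwise
    _ = (∫ t in Set.Iic a, (1 + (t : ℂ) * z) / ((t : ℂ) - z) ∂μ).re := by
        simpa using integral_re hint

theorem stmt_17 (a : ℝ) (μ : Measure ℝ) [IsFiniteMeasure μ]
    (hsupp : μ (Set.Ioi a) = 0) (hL1 : ¬ Integrable (fun t : ℝ => t) μ) :
    Tendsto (fun x : ℝ => ∫ t in Set.Iic a, (1 + t * x) / (t - x) ∂μ)
      atTop atTop ∧
    StrictMonoOn (fun x : ℝ => ∫ t in Set.Iic a, (1 + t * x) / (t - x) ∂μ)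
      (Set.Ioi a) ∧
    (∀ x : ℝ, a < x → ∀ y : ℝ,
      (∫ t in Set.Iic a, (1 + t * x) / (t - x) ∂μ) ≤
        (∫ t in Set.Iic a,
          (1 + (t : ℂ) * ((x : ℂ) + (y : ℂ) * Complex.I)) /
            ((t : ℂ) - ((x : ℂ) + (y : ℂ) * Complex.I)) ∂μ).re) := by
  have hmono := aux_mono a μ hsupp hL1
  refine ⟨?_, hmono, fun x hx y => aux_cx a x y μ hx⟩
  rw [tendsto_atTop]
  intro M
  obtain ⟨x₀, hx₀, hM⟩ := aux_unbdd a μ hsupp hL1 M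
  filter_upwards [eventually_ge_atTop x₀] with x hx
  have hax : a < x := lt_of_lt_of_le hx₀ hx
  exact le_trans hM.le (hmono.monotoneOn (Set.mem_Ioi.mpr hx₀) (Set.mem_Ioi.mpr hax) hx)
end
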